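/- arXiv:2112.09041 — 6 statements merged into one kernel-verified Lean document; each statement's English description precedes it below -/
import Mathlib

section
/- Suppose 𝒥 is a compact, connected, locally connected metric space, f : 𝒥 → 𝒥 is a surjective covering map, and 𝒰₀ is a finite cover of 𝒥 by open connected sets such that (f, 𝒰₀) satisfies Axiom [Expansion]. Then the following two axioms also hold. (Degree) For each n ∈ ℕ there is a bound D_n such that for every U ∈ 𝒰₀, every Ũ ∈ 𝒰_n with fⁿ(Ũ) ⊆ U, and every y ∈ U, the fiber { z ∈ Ũ : fⁿ(z) = y } has at most D_n elements. (Irreducibility) For every nonempty open set W ⊆ 𝒥 there is an integer N with f^N(W) = 𝒥. -/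
open Set Filter

noncomputable section

/-- The sequence of covers generated from `U₀` by taking connected components of preimages
under `f`: `𝒰₀ = U₀`, and `𝒰_{n+1}` consists of the connected components of `f⁻¹(U)`
for `U ∈ 𝒰_n`. -/
def iterCover {J : Type*} [TopologicalSpace J] (f : J → J) (U0 : Set (Set J)) : ℕ → Set (Set J)
  | 0 => U0
  | (n + 1) => {V | ∃ U ∈ iterCover f U0 n, ∃ x ∈ f ⁻¹' U, V = connectedComponentIn (f ⁻¹' U) x}

/-- The mesh of a collection of subsets of a metric space: the supremum of the diameters of
its members. -/
def mesh {J : Type*} [PseudoEMetricSpace J] (C : Set (Set J)) : ENNReal :=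
  ⨆ V ∈ C, EMetric.diam V

/-- `U₀` is a finite cover by nonempty open connected sets. -/
def GoodCover {J : Type*} [TopologicalSpace J] (U0 : Set (Set J)) : Prop :=
  U0.Finite ∧ (∀ U ∈ U0, IsOpen U ∧ IsConnected U) ∧ ⋃₀ U0 = Set.univ

/-- Axiom [Expansion]: the mesh of the iterated covers tends to 0. -/
def ExpansionAxiom {J : Type*} [PseudoEMetricSpace J] (f : J → J) (U0 : Set (Set J)) : Prop :=
  Tendsto (fun n => mesh (iterCover f U0 n)) atTop (nhds 0)

/-- Axiom [Degree]: for each `n` there is a uniform bound on the cardinality of fibers of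
`f^n : Ũ → U` for `U ∈ 𝒰₀` and `Ũ ∈ 𝒰_n` with `f^n(Ũ) ⊆ U`. -/
def DegreeAxiom {J : Type*} [TopologicalSpace J] (f : J → J) (U0 : Set (Set J)) : Prop :=
  ∀ n : ℕ, ∃ D : ℕ, ∀ U ∈ U0, ∀ V ∈ iterCover f U0 n, f^[n] '' V ⊆ U →
    ∀ y ∈ U, ({z ∈ V | f^[n] z = y}).encard ≤ D

/-- Axiom [Irreducibility]: every nonempty open set eventually covers the whole space. -/
def IrreducibilityAxiom {J : Type*} [TopologicalSpace J] (f : J → J) : Prop :=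
  ∀ W : Set J, IsOpen W → W.Nonempty → ∃ N : ℕ, f^[N] '' W = Set.univ

/-! ### Auxiliary lemmas -/

section Aux

variable {J : Type*} [TopologicalSpace J]

/-- Key topological fact: for a covering map, the image of a connected component of the
preimage of an open connected set is the whole set. -/
theorem keyOnto [LocallyConnectedSpace J] {f : J → J} (hcov : IsCoveringMap f)
    {U : Set J} (hUo : IsOpen U) (hUc : IsPreconnected U) {x : J} (hx : x ∈ f ⁻¹' U) :
    f '' connectedComponentIn (f ⁻¹' U) x = U := by
  set C := connectedComponentIn (f ⁻¹' U) x with hC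
  have hCsub : C ⊆ f ⁻¹' U := connectedComponentIn_subset _ _
  have himsub : f '' C ⊆ U := by rintro _ ⟨z, hz, rfl⟩; exact hCsub hz
  have key : ∀ u ∈ U, u ∈ closure (f '' C) → u ∈ f '' C := by
    intro u hu hucl
    haveI : Nonempty (f ⁻¹' {u}) := by
      by_contra hne
      rw [not_nonempty_iff] at hne
      obtain ⟨_, V, huV, hVo, _, H, _⟩ := hcov u
      obtain ⟨b, hbV, ⟨z, _, rfl⟩⟩ := mem_closure_iff.mp hucl V hVo huV
      exact hne.elim (H ⟨z, hbV⟩).2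
    set t := (hcov u).toTrivialization with ht
    have hub : u ∈ t.baseSet := (hcov u).mem_toTrivialization_baseSet
    set N := connectedComponentIn (t.baseSet ∩ U) u with hN
    have hNo : IsOpen N := (t.open_baseSet.inter hUo).connectedComponentIn
    have huN : u ∈ N := mem_connectedComponentIn ⟨hub, hu⟩
    have hNsub : N ⊆ t.baseSet ∩ U := connectedComponentIn_subset _ _
    have hNc : IsPreconnected N := isPreconnected_connectedComponentIn
    obtain ⟨b₀, hb₀N, hb₀C⟩ := mem_closure_iff.mp hucl N hNo huN
    obtain ⟨v, hvC, hfv⟩ := hb₀C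
    have hfvN : f v ∈ N := by rw [hfv]; exact hb₀N
    have hvsrc : v ∈ t.source := t.mem_source.mpr (hNsub hfvN).1
    set i := (t v).2 with hi
    set S := t.toPartialHomeomorph.symm '' (N ×ˢ ({i} : Set (f ⁻¹' {u}))) with hS
    have hsubT : (N ×ˢ ({i} : Set (f ⁻¹' {u}))) ⊆ t.target := by
      rintro ⟨b, j⟩ ⟨hb, _⟩
      exact t.mem_target.mpr (hNsub hb).1
    have hSc : IsPreconnected S :=
      (hNc.prod isPreconnected_singleton).image _
        (t.toPartialHomeomorph.continuousOn_symm.mono hsubT)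
    have hfS : ∀ p ∈ (N ×ˢ ({i} : Set (f ⁻¹' {u}))),
        f (t.toPartialHomeomorph.symm p) = p.1 := fun p hp => t.proj_symm_apply (hsubT hp)
    have hfSN : f '' S = N := by
      have h1 : f '' S = (f ∘ t.toPartialHomeomorph.symm) '' (N ×ˢ ({i} : Set (f ⁻¹' {u}))) :=
        (Set.image_comp f _ _).symm
      have h2 : (f ∘ t.toPartialHomeomorph.symm) '' (N ×ˢ ({i} : Set (f ⁻¹' {u})))
          = Prod.fst '' (N ×ˢ ({i} : Set (f ⁻¹' {u}))) := Set.EqOn.image_eq hfS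
      rw [h1, h2]
      exact fst_image_prod _ (singleton_nonempty i)
    have hvS : v ∈ S := by
      refine ⟨(f v, i), ⟨hfvN, rfl⟩, ?_⟩
      exact t.symm_apply_mk_proj hvsrc
    have hSsub : S ⊆ f ⁻¹' U := by
      intro z hz
      have : f z ∈ N := hfSN ▸ mem_image_of_mem f hz
      exact (hNsub this).2
    have hSC : S ⊆ C := by
      have h1 : S ⊆ connectedComponentIn (f ⁻¹' U) v :=
        hSc.subset_connectedComponentIn hvS hSsub
      rwa [← connectedComponentIn_eq hvC] at h1
    have : u ∈ f '' S := hfSN.symm ▸ huN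
    exact image_mono hSC this
  refine subset_antisymm himsub ?_
  have hAo : IsOpen (f '' C) :=
    hcov.isOpenMap _ ((hUo.preimage hcov.continuous).connectedComponentIn)
  have hfxA : f x ∈ U ∩ f '' C := ⟨hx, mem_image_of_mem f (mem_connectedComponentIn hx)⟩
  intro u hu
  apply key u hu
  by_contra hucl
  have hcover : U ⊆ f '' C ∪ (closure (f '' C))ᶜ := by
    intro w hw
    by_cases hwc : w ∈ closure (f '' C)
    · exact Or.inl (key w hw hwc)
    · exact Or.inr hwc
  obtain ⟨z, _, hzA, hzB⟩ := hUc _ _ hAo isClosed_closure.isOpen_compl hcover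
    ⟨f x, hfxA.1, hfxA.2⟩ ⟨u, hu, hucl⟩
  exact hzB (subset_closure hzA)

theorem iterCover_isOpen_isConnected [LocallyConnectedSpace J] {f : J → J}
    (hcov : IsCoveringMap f) {U0 : Set (Set J)} (h0 : ∀ U ∈ U0, IsOpen U ∧ IsConnected U) :
    ∀ n, ∀ V ∈ iterCover f U0 n, IsOpen V ∧ IsConnected V := by
  intro n
  induction n with
  | zero => exact h0
  | succ n ih =>
    rintro V ⟨U, hU, x, hxU, rfl⟩
    exact ⟨((ih U hU).1.preimage hcov.continuous).connectedComponentIn,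
      isConnected_connectedComponentIn_iff.mpr hxU⟩

theorem compIn_iterate_mem [LocallyConnectedSpace J] {f : J → J} (hcov : IsCoveringMap f)
    {U0 : Set (Set J)} (h0 : ∀ U ∈ U0, IsOpen U ∧ IsConnected U) :
    ∀ n, ∀ U ∈ U0, ∀ z, f^[n] z ∈ U →
      connectedComponentIn (f^[n] ⁻¹' U) z ∈ iterCover f U0 n ∧
      f^[n] '' connectedComponentIn (f^[n] ⁻¹' U) z = U := by
  intro n
  induction n with
  | zero =>
    intro U hU z hz
    have hz0 : z ∈ U := by simpa using hz
    have h1 : f^[0] ⁻¹' U = U := by simp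
    have h2 : connectedComponentIn (f^[0] ⁻¹' U) z = U := by
      rw [h1]; exact (h0 U hU).2.isPreconnected.connectedComponentIn hz0
    rw [h2]
    exact ⟨hU, by simp⟩
  | succ n ih =>
    intro U hU z hz
    have hit : f^[n+1] = f^[n] ∘ f := Function.iterate_succ f n
    have hz' : f^[n] (f z) ∈ U := by rwa [← Function.iterate_succ_apply]
    set V₁ := connectedComponentIn (f^[n] ⁻¹' U) (f z) with hV₁
    obtain ⟨hV₁mem, hV₁im⟩ := ih U hU (f z) hz'
    obtain ⟨hV₁o, hV₁c⟩ := iterCover_isOpen_isConnected hcov h0 n V₁ hV₁mem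
    have hfzV₁ : f z ∈ V₁ := mem_connectedComponentIn hz'
    have hpre : f^[n+1] ⁻¹' U = f ⁻¹' (f^[n] ⁻¹' U) := by rw [hit]; rfl
    have hzpre : z ∈ f ⁻¹' V₁ := hfzV₁
    have hCeq : connectedComponentIn (f^[n+1] ⁻¹' U) z = connectedComponentIn (f ⁻¹' V₁) z := by
      rw [hpre]
      refine subset_antisymm ?_
        (connectedComponentIn_mono z (preimage_mono (connectedComponentIn_subset _ _)))
      have hzC : z ∈ connectedComponentIn (f ⁻¹' (f^[n] ⁻¹' U)) z :=
        mem_connectedComponentIn (show f (z) ∈ f^[n] ⁻¹' U from hz')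
      have hCc : IsPreconnected (connectedComponentIn (f ⁻¹' (f^[n] ⁻¹' U)) z) :=
        isPreconnected_connectedComponentIn
      have himc : f '' connectedComponentIn (f ⁻¹' (f^[n] ⁻¹' U)) z ⊆ V₁ := by
        refine (hCc.image f hcov.continuous.continuousOn).subset_connectedComponentIn
          (mem_image_of_mem f hzC) ?_
        rintro _ ⟨w, hw, rfl⟩
        exact mem_preimage.mp (connectedComponentIn_subset (f ⁻¹' (f^[n] ⁻¹' U)) z hw)
      exact hCc.subset_connectedComponentIn hzC (fun w hw => himc (mem_image_of_mem f hw))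
    constructor
    · rw [hCeq]
      exact ⟨V₁, hV₁mem, z, hzpre, rfl⟩
    · rw [hCeq, hit, Set.image_comp]
      rw [keyOnto hcov hV₁o hV₁c.isPreconnected hzpre, hV₁im]

/-- Chains of members of `U0` of length `k` from `U` to `U'`. -/
def ChainTo {J : Type*} (U0 : Set (Set J)) : ℕ → Set J → Set J → Prop
  | 0, U, U' => U = U'
  | (k+1), U, U' => ∃ U'' ∈ U0, ChainTo U0 k U U'' ∧ (U'' ∩ U').Nonempty

theorem ChainTo.succ {U0 : Set (Set J)} {k : ℕ} {U U' : Set J} (hU' : U' ∈ U0)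
    (hne : U'.Nonempty) (h : ChainTo U0 k U U') : ChainTo U0 (k+1) U U' :=
  ⟨U', hU', h, by simpa [Set.inter_self] using hne⟩

theorem ChainTo.mono {U0 : Set (Set J)} {k k' : ℕ} (hk : k ≤ k') {U U' : Set J} (hU' : U' ∈ U0)
    (hne : U'.Nonempty) (h : ChainTo U0 k U U') : ChainTo U0 k' U U' := by
  induction k', hk using Nat.le_induction with
  | base => exact h
  | succ m _ ih => exact ih.succ hU' hne

theorem chain_exists [ConnectedSpace J] {U0 : Set (Set J)}
    (hopen : ∀ U ∈ U0, IsOpen U) (hne : ∀ U ∈ U0, U.Nonempty) (hcover : ⋃₀ U0 = Set.univ)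
    {U : Set J} (hU : U ∈ U0) {U' : Set J} (hU' : U' ∈ U0) : ∃ k, ChainTo U0 k U U' := by
  by_contra hcon
  set R := {W ∈ U0 | ∃ k, ChainTo U0 k U W} with hR
  have hAo : IsOpen (⋃₀ R) := isOpen_sUnion (fun W hW => hopen W hW.1)
  have hBo : IsOpen (⋃₀ (U0 \ R)) := isOpen_sUnion fun W hW => hopen W hW.1
  have hcover' : (Set.univ : Set J) ⊆ ⋃₀ R ∪ ⋃₀ (U0 \ R) := by
    intro x _
    have hx : x ∈ ⋃₀ U0 := by rw [hcover]; trivial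
    obtain ⟨W, hW, hxW⟩ := hx
    by_cases h : W ∈ R
    · exact Or.inl ⟨W, h, hxW⟩
    · exact Or.inr ⟨W, ⟨hW, h⟩, hxW⟩
  have hAne : (Set.univ ∩ ⋃₀ R).Nonempty := by
    obtain ⟨x, hx⟩ := hne U hU
    exact ⟨x, trivial, U, ⟨hU, 0, rfl⟩, hx⟩
  have hBne : (Set.univ ∩ ⋃₀ (U0 \ R)).Nonempty := by
    obtain ⟨x, hx⟩ := hne U' hU'
    exact ⟨x, trivial, U', ⟨hU', fun hmem => hcon hmem.2⟩, hx⟩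
  obtain ⟨z, _, ⟨W₁, hW₁R, hzW₁⟩, ⟨W₂, hW₂, hzW₂⟩⟩ :=
    isPreconnected_univ _ _ hAo hBo hcover' hAne hBne
  obtain ⟨k, hk⟩ := hW₁R.2
  exact hW₂.2 ⟨hW₂.1, k+1, ⟨W₁, hW₁R.1, hk, ⟨z, hzW₁, hzW₂⟩⟩⟩

theorem chain_uniform [ConnectedSpace J] {U0 : Set (Set J)} (hfin : U0.Finite)
    (hopen : ∀ U ∈ U0, IsOpen U) (hne : ∀ U ∈ U0, U.Nonempty) (hcover : ⋃₀ U0 = Set.univ) :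
    ∃ L : ℕ, ∀ U ∈ U0, ∀ U' ∈ U0, ChainTo U0 L U U' := by
  classical
  have key : ∀ p : Set J × Set J, ∃ k, p.1 ∈ U0 → p.2 ∈ U0 → ChainTo U0 k p.1 p.2 := by
    intro p
    by_cases h1 : p.1 ∈ U0 ∧ p.2 ∈ U0
    · obtain ⟨k, hk⟩ := chain_exists hopen hne hcover h1.1 h1.2
      exact ⟨k, fun _ _ => hk⟩
    · exact ⟨0, fun ha hb => absurd ⟨ha, hb⟩ h1⟩
  choose g hg using key
  refine ⟨(hfin.prod hfin).toFinset.sup g, ?_⟩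
  intro U hU U' hU'
  have hmem : (U, U') ∈ (hfin.prod hfin).toFinset := by
    rw [Set.Finite.mem_toFinset]
    exact ⟨hU, hU'⟩
  exact (hg (U, U') hU hU').mono (Finset.le_sup hmem) hU' (hne U' hU')

end Aux

section AuxMetric

variable {J : Type*} [MetricSpace J]

theorem edist_le_mesh {C : Set (Set J)} {V : Set J} (hV : V ∈ C) {z w : J}
    (hz : z ∈ V) (hw : w ∈ V) : edist z w ≤ mesh C :=
  le_trans (EMetric.edist_le_diam_of_mem hz hw) (le_iSup₂_of_le V hV le_rfl)

theorem walk [LocallyConnectedSpace J] {f : J → J} (hcov : IsCoveringMap f)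
    {U0 : Set (Set J)} (h0 : ∀ U ∈ U0, IsOpen U ∧ IsConnected U) :
    ∀ k (U U' : Set J), U ∈ U0 → U' ∈ U0 → ChainTo U0 k U U' → ∀ n (z : J), f^[n] z ∈ U →
      ∀ y ∈ U', ∃ w, f^[n] w = y ∧
        edist z w ≤ ((k : ENNReal) + 1) * mesh (iterCover f U0 n) := by
  intro k
  induction k with
  | zero =>
    intro U U' hU hU' hchain n z hz y hy
    obtain rfl : U = U' := hchain
    obtain ⟨hmem, him⟩ := compIn_iterate_mem hcov h0 n U hU z hz
    rw [← him] at hy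
    obtain ⟨w, hwV, hwy⟩ := hy
    refine ⟨w, hwy, ?_⟩
    have h1 : edist z w ≤ mesh (iterCover f U0 n) :=
      edist_le_mesh hmem (mem_connectedComponentIn hz) hwV
    simpa using h1
  | succ k ih =>
    rintro U U' hU hU' ⟨U'', hU'', hchain, b, hbU'', hbU'⟩ n z hz y hy
    obtain ⟨w₁, hw₁b, hw₁d⟩ := ih U U'' hU hU'' hchain n z hz b hbU''
    have hw₁U' : f^[n] w₁ ∈ U' := by rw [hw₁b]; exact hbU'
    obtain ⟨hmem, him⟩ := compIn_iterate_mem hcov h0 n U' hU' w₁ hw₁U'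
    rw [← him] at hy
    obtain ⟨w, hwV, hwy⟩ := hy
    refine ⟨w, hwy, ?_⟩
    have h2 : edist w₁ w ≤ mesh (iterCover f U0 n) :=
      edist_le_mesh hmem (mem_connectedComponentIn hw₁U') hwV
    calc edist z w ≤ edist z w₁ + edist w₁ w := edist_triangle _ _ _
      _ ≤ ((k : ENNReal) + 1) * mesh (iterCover f U0 n) + 1 * mesh (iterCover f U0 n) :=
          add_le_add hw₁d (by simpa using h2)
      _ = (((k : ℕ) + 1 : ℕ) + 1 : ENNReal) * mesh (iterCover f U0 n) := by
          push_cast; ring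

end AuxMetric

/-- if `𝒥` is a compact, connected, locally connected metric space,
`f : 𝒥 → 𝒥` a surjective covering map, and `𝒰₀` a finite cover by open connected sets such
that `(f, 𝒰₀)` satisfies Axiom [Expansion], then Axioms [Degree] and [Irreducibility] hold. -/
theorem degree_and_irreducibility_of_expansion
    {J : Type*} [MetricSpace J] [CompactSpace J] [ConnectedSpace J] [LocallyConnectedSpace J]
    (f : J → J) (hcov : IsCoveringMap f) (hsurj : Function.Surjective f)
    (U0 : Set (Set J)) (hU0 : GoodCover U0) (hexp : ExpansionAxiom f U0) :
    DegreeAxiom f U0 ∧ IrreducibilityAxiom f := by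
  obtain ⟨hfin, hprops, hcover⟩ := hU0
  constructor
  · -- Degree axiom
    -- fibers of f are finite
    haveI : ∀ y, Nonempty (f ⁻¹' {y}) := fun y => ⟨⟨(hsurj y).choose, (hsurj y).choose_spec⟩⟩
    have hfib_fin : ∀ y : J, (f ⁻¹' {y}).Finite := fun y =>
      ((isClosed_singleton.preimage hcov.continuous).isCompact).finite (isDiscrete_iff_discreteTopology.mpr (hcov y).1)
    -- uniform bound on fibers of f
    obtain ⟨s, hs⟩ := isCompact_univ.elim_finite_subcover
      (fun y : J => (hcov y).toTrivialization.baseSet)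
      (fun y => (hcov y).toTrivialization.open_baseSet)
      (fun x _ => mem_iUnion.mpr ⟨x, (hcov x).mem_toTrivialization_baseSet⟩)
    set D1 : ℕ := s.sup (fun y0 => (hfib_fin y0).toFinset.card) with hD1
    have hfiber_le : ∀ y : J, (f ⁻¹' {y}).encard ≤ (D1 : ℕ∞) := by
      intro y
      have hy : y ∈ ⋃ y0 ∈ s, (hcov y0).toTrivialization.baseSet := hs (mem_univ y)
      obtain ⟨y0, hy0s, hybase⟩ := mem_iUnion₂.mp hy
      set t := (hcov y0).toTrivialization with htdef
      have hsrc : ∀ a ∈ f ⁻¹' {y}, a ∈ t.source := by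
        intro a ha
        rw [mem_preimage, mem_singleton_iff] at ha
        exact t.mem_source.mpr (by rw [ha]; exact hybase)
      have hinj : Set.InjOn (fun z => (t z).2) (f ⁻¹' {y}) := by
        intro a ha b hb hab
        refine t.injOn (hsrc a ha) (hsrc b hb) (Prod.ext ?_ hab)
        show (t a).1 = (t b).1
        rw [t.coe_fst (hsrc a ha), t.coe_fst (hsrc b hb)]
        rw [mem_preimage, mem_singleton_iff] at ha hb
        rw [ha, hb]
      have h1 : (f ⁻¹' {y}).encard = ((fun z => (t z).2) '' (f ⁻¹' {y})).encard :=
        (hinj.encard_image).symm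
      have h2 : ((fun z => (t z).2) '' (f ⁻¹' {y})).encard
          ≤ (Set.univ : Set (f ⁻¹' {y0})).encard := encard_le_encard (subset_univ _)
      rw [encard_univ] at h2
      have h3 : (f ⁻¹' {y0}).encard = ((hfib_fin y0).toFinset.card : ℕ∞) := by
        rw [Set.Finite.encard_eq_coe_toFinset_card]
      have h4 : ((hfib_fin y0).toFinset.card : ℕ∞) ≤ (D1 : ℕ∞) :=
        Nat.cast_le.mpr (by
          rw [hD1]
          exact Finset.le_sup (f := fun y0 => (hfib_fin y0).toFinset.card) hy0s)
      rw [h1]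
      exact h2.trans (h3.le.trans h4)
    -- bound on unions
    have biUnion_le : ∀ (M : ℕ∞) (g : J → Set J) (F : Set J), F.Finite →
        (∀ w ∈ F, (g w).encard ≤ M) → (⋃ w ∈ F, g w).encard ≤ F.encard * M := by
      intro M g F hF
      refine Set.Finite.induction_on
        (motive := fun F _ => (∀ w ∈ F, (g w).encard ≤ M) → (⋃ w ∈ F, g w).encard ≤ F.encard * M)
        F hF (by intro _; simp) ?_
      intro a F' haF' hF' ih hbound
      rw [biUnion_insert]
      calc (g a ∪ ⋃ w ∈ F', g w).encard ≤ (g a).encard + (⋃ w ∈ F', g w).encard :=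
            encard_union_le _ _
        _ ≤ M + F'.encard * M :=
            add_le_add (hbound a (mem_insert _ _))
              (ih fun w hw => hbound w (mem_insert_of_mem _ hw))
        _ = (1 + F'.encard) * M := by rw [add_mul, one_mul]
        _ = (insert a F').encard * M := by
            rw [Set.encard_insert_of_notMem haF', add_comm]
    -- fibers of iterates
    have hiter : ∀ n (y : J), (f^[n] ⁻¹' {y}).encard ≤ (D1 : ℕ∞) ^ n := by
      intro n
      induction n with
      | zero => intro y; simp
      | succ n ih =>
        intro y
        have hpre : f^[n+1] ⁻¹' {y} = ⋃ w ∈ f ⁻¹' {y}, f^[n] ⁻¹' {w} := by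
          ext z
          simp only [mem_preimage, mem_singleton_iff, mem_iUnion, exists_prop]
          constructor
          · intro hz
            exact ⟨f^[n] z, by rw [← Function.iterate_succ_apply' f n z]; exact hz, rfl⟩
          · rintro ⟨w, hw, hzw⟩
            rw [Function.iterate_succ_apply', hzw]
            exact hw
        rw [hpre]
        calc (⋃ w ∈ f ⁻¹' {y}, f^[n] ⁻¹' {w}).encard
            ≤ (f ⁻¹' {y}).encard * ((D1 : ℕ∞) ^ n) :=
              biUnion_le _ _ _ (hfib_fin y) (fun w _ => ih w)
          _ ≤ (D1 : ℕ∞) * (D1 : ℕ∞) ^ n := mul_le_mul_left (hfiber_le y) _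
          _ = (D1 : ℕ∞) ^ (n+1) := (pow_succ' _ _).symm
    intro n
    refine ⟨D1 ^ n, ?_⟩
    intro U _ V _ _ y _
    have hsub : {z ∈ V | f^[n] z = y} ⊆ f^[n] ⁻¹' {y} := by
      rintro z ⟨_, hz⟩
      simpa using hz
    calc ({z ∈ V | f^[n] z = y}).encard ≤ (f^[n] ⁻¹' {y}).encard := encard_mono hsub
      _ ≤ (D1 : ℕ∞) ^ n := hiter n y
      _ = ((D1 ^ n : ℕ) : ℕ∞) := by push_cast; ring
  · -- Irreducibility
    intro W hWo hWne
    obtain ⟨x, hxW⟩ := hWne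
    obtain ⟨ε, hε, hball⟩ := Metric.isOpen_iff.mp hWo x hxW
    obtain ⟨L, hL⟩ := chain_uniform hfin (fun U hU => (hprops U hU).1)
      (fun U hU => (hprops U hU).2.nonempty) hcover
    have htend : Tendsto (fun n => ((L : ENNReal) + 1) * mesh (iterCover f U0 n))
        atTop (nhds 0) := by
      have := ENNReal.Tendsto.const_mul hexp
        (Or.inr (by simp : ((L : ENNReal) + 1) ≠ ⊤))
      simpa using this
    have hlt : ∀ᶠ n in atTop,
        ((L : ENNReal) + 1) * mesh (iterCover f U0 n) < ENNReal.ofReal ε :=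
      htend.eventually_lt_const (ENNReal.ofReal_pos.mpr hε)
    obtain ⟨n, hn⟩ := hlt.exists
    refine ⟨n, ?_⟩
    rw [Set.eq_univ_iff_forall]
    intro y
    have hfx : f^[n] x ∈ ⋃₀ U0 := by rw [hcover]; trivial
    obtain ⟨U, hU, hfxU⟩ := hfx
    have hyc : y ∈ ⋃₀ U0 := by rw [hcover]; trivial
    obtain ⟨U', hU', hyU'⟩ := hyc
    obtain ⟨w, hwy, hwd⟩ := walk hcov hprops L U U' hU hU' (hL U hU U' hU') n x hfxU y hyU'
    have hwW : w ∈ W := by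
      apply hball
      rw [Metric.mem_ball, dist_comm]
      rw [← edist_lt_ofReal]
      exact lt_of_le_of_lt hwd hn
    exact ⟨w, hwW, hwy⟩

end
end

section
/- Let X be a compact, connected metric space homeomorphic to a finite CW complex whose metric is geodesic (any two points are joined by a continuous path whose length equals their distance), and let sys(X), the systole of X, be the infimum of the lengths of loops in X that are not null-homotopic. Let p : X̃ → X be a covering map and equip X̃ with a lifted metric d̃ (an intrinsic metric inducing the covering-space topology for which p preserves lengths of paths). Then for every r < sys(X)/4 and every x̃ ∈ X̃ with p(x̃) = x, the restriction of p to the open ball B(x̃, r) is an isometry onto the open ball B(x, r): it maps B(x̃, r) bijectively onto B(x, r) and d(p(ã), p(b̃)) = d̃(ã, b̃) for all ã, b̃ ∈ B(x̃, r). -/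
open Set Filter unitInterval

noncomputable section

/-- The length (total variation) of a path in an extended metric space, valued in `ℝ≥0∞`. -/
def pathELength {X : Type*} [PseudoEMetricSpace X] (γ : unitInterval → X) : ENNReal :=
  eVariationOn γ Set.univ

/-- A metric is intrinsic (a length metric) if the distance between any two points is the
infimum of the lengths of continuous paths joining them. -/
def IsLengthMetric (X : Type*) [MetricSpace X] : Prop :=
  ∀ x y : X, edist x y = ⨅ γ : Path x y, pathELength (fun t => γ t)

/-- A metric is geodesic if any two points are joined by a path whose length equals their
distance. -/
def IsGeodesicMetric (X : Type*) [MetricSpace X] : Prop :=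
  ∀ x y : X, ∃ γ : Path x y, pathELength (fun t => γ t) = edist x y

/-- `p` preserves lengths of (continuous) paths. -/
def PreservesPathLength {E X : Type*} [MetricSpace E] [MetricSpace X] (p : E → X) : Prop :=
  ∀ γ : unitInterval → E, Continuous γ → pathELength (p ∘ γ) = pathELength γ

/-- The metric on the total space of a covering map `p` is a lifted metric if it is intrinsic
and `p` preserves lengths of paths (its topology is the metric topology). -/
def IsLiftedMetric {E X : Type*} [MetricSpace E] [MetricSpace X] (p : E → X) : Prop :=
  IsLengthMetric E ∧ PreservesPathLength p

/-- The closed unit ball in `ℝⁿ`, the model for an `n`-cell. -/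
def unitClosedBall (n : ℕ) : Set (EuclideanSpace ℝ (Fin n)) :=
  Metric.closedBall 0 1

/-- The open part (interior) of the model `n`-cell. -/
def openPart {n : ℕ} : Set (unitClosedBall n) :=
  {y | ‖(y : EuclideanSpace ℝ (Fin n))‖ < 1}

/-- The boundary sphere of the model `n`-cell. -/
def spherePart {n : ℕ} : Set (unitClosedBall n) :=
  {y | ‖(y : EuclideanSpace ℝ (Fin n))‖ = 1}

/-- `X` is (homeomorphic to) a finite CW complex: `X` is Hausdorff and admits finitely many
characteristic maps of cells whose open cells partition `X`, each characteristic map restricting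
to an embedding on the open cell, and each cell boundary mapped into the union of the open cells
of strictly smaller dimension. (For a finite complex, the weak topology condition is
automatic.) -/
def IsFiniteCWComplex (X : Type*) [TopologicalSpace X] : Prop :=
  T2Space X ∧
  ∃ (N : ℕ) (d : Fin N → ℕ) (Φ : ∀ i : Fin N, ↥(unitClosedBall (d i)) → X),
    (∀ i, Continuous (Φ i)) ∧
    (∀ i, Topology.IsEmbedding fun y : ↥(openPart (n := d i)) => Φ i y.1) ∧
    (⋃ i, Φ i '' openPart) = Set.univ ∧
    (Pairwise fun i j => Disjoint (Φ i '' openPart) (Φ j '' openPart)) ∧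
    (∀ i, Φ i '' spherePart ⊆ ⋃ j ∈ {j : Fin N | d j < d i}, Φ j '' openPart)

/-- `φ` is `π₁`-surjective: every loop downstairs based at `φ x` is, up to path homotopy, the
image of a loop upstairs based at `x`. -/
def Pi1Surjective {X Y : Type*} [TopologicalSpace X] [TopologicalSpace Y]
    {φ : X → Y} (hφ : Continuous φ) : Prop :=
  ∀ (x : X) (β : Path (φ x) (φ x)), ∃ α : Path x x, (α.map hφ).Homotopic β

variable {X₀ X₁ : Type*} [MetricSpace X₀] [MetricSpace X₁]


/-- `SizeLE p γ K`: the size of the path `γ` (the diameter of a lift of `γ` to the cover `p`,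
measured in the lifted metric) is at most `K`. -/
def SizeLE {E X : Type*} [MetricSpace E] [TopologicalSpace X]
    (p : E → X) (γ : unitInterval → X) (K : ENNReal) : Prop :=
  ∃ γ' : unitInterval → E, Continuous γ' ∧ p ∘ γ' = γ ∧ EMetric.diam (Set.range γ') ≤ K

/-- The systole of `X`: the infimum of the lengths of loops in `X` that are not
null-homotopic (rel basepoint). -/
def systole (X : Type*) [MetricSpace X] : ENNReal :=
  sInf {L | ∃ (x : X) (γ : Path x x), ¬ γ.Homotopic (Path.refl x) ∧
    L = pathELength (fun t => γ t)}




set_option linter.unusedSectionVars false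

section LiftingMachinery
variable {E X : Type*} [TopologicalSpace E] [TopologicalSpace X] {p : E → X}

/-- clamp of `t` into `[a,b]` inside the unit interval. -/
def iclamp (a b t : I) : I :=
  ⟨max (a : ℝ) (min (t : ℝ) (b : ℝ)), by
    constructor
    · exact le_trans a.2.1 (le_max_left _ _)
    · exact max_le a.2.2 (le_trans (min_le_left _ _) t.2.2)⟩

lemma iclamp_of_mem {a b t : I} (h : t ∈ Icc a b) : iclamp a b t = t := by
  have h1 : (t : ℝ) ≤ b := h.2
  have h2 : (a : ℝ) ≤ t := h.1
  simp [iclamp, min_eq_left h1, max_eq_right h2]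

lemma iclamp_mem {a b : I} (hab : a ≤ b) (t : I) : iclamp a b t ∈ Icc a b := by
  constructor
  · exact Subtype.coe_le_coe.mp (le_max_left _ _)
  · refine Subtype.coe_le_coe.mp (max_le hab (min_le_right _ _))

lemma continuous_iclamp (a b : I) : Continuous (iclamp a b) :=
  Continuous.subtype_mk (continuous_const.max ((continuous_subtype_val).min continuous_const)) _

/-- A continuous local section of a trivialization through a point `e`. -/
lemma Bundle.Trivialization.exists_lift {F : Type*} [TopologicalSpace F] (T : Bundle.Trivialization F p)
    {A : Type*} [TopologicalSpace A] {f : A → X} (hf : Continuous f)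
    (hrange : ∀ a, f a ∈ T.baseSet) (e : E) (he : e ∈ T.source) :
    ∃ g : A → E, Continuous g ∧ (∀ a, p (g a) = f a) ∧ (∀ a, f a = p e → g a = e) := by
  refine ⟨fun a => T.toOpenPartialHomeomorph.symm (f a, (T e).2), ?_, ?_, ?_⟩
  · apply T.toOpenPartialHomeomorph.continuousOn_symm.comp_continuous (hf.prodMk continuous_const)
    intro a
    exact T.mem_target.2 (hrange a)
  · intro a
    exact T.proj_symm_apply (T.mem_target.2 (hrange a))
  · intro a hfa
    show T.toOpenPartialHomeomorph.symm (f a, (T e).2) = e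
    rw [hfa, T.mk_proj_snd he]
    exact T.toOpenPartialHomeomorph.left_inv he

section Lift
variable (p) (H : I × I → X)

/-- Liftability of `H` on the rectangle `[a,b] × [c,d]`, from any point over the corner. -/
def RectLift (a b c d : I) : Prop :=
  ∀ e : E, p e = H (a, c) → ∃ G : I × I → E, Continuous G ∧
    (∀ q ∈ Icc a b ×ˢ Icc c d, p (G q) = H q) ∧ G (a, c) = e

variable {p H}

lemma RectLift.mono {a b c d b' d' : I} (h : RectLift p H a b c d) (hb : b' ≤ b) (hd : d' ≤ d) :
    RectLift p H a b' c d' := by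
  intro e he
  obtain ⟨G, hG, hpG, hGc⟩ := h e he
  exact ⟨G, hG, fun q hq => hpG q ⟨⟨hq.1.1, hq.1.2.trans hb⟩, ⟨hq.2.1, hq.2.2.trans hd⟩⟩, hGc⟩

lemma rectLift_of_baseSet {F : Type*} [TopologicalSpace F] (T : Bundle.Trivialization F p)
    (hH : Continuous H) {a b c d : I} (hab : a ≤ b) (hcd : c ≤ d)
    (him : ∀ q ∈ Icc a b ×ˢ Icc c d, H q ∈ T.baseSet) : RectLift p H a b c d := by
  intro e he
  set f : I × I → X := fun q => H (iclamp a b q.1, iclamp c d q.2) with hf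
  have hfc : Continuous f :=
    hH.comp (((continuous_iclamp a b).comp continuous_fst).prodMk
      ((continuous_iclamp c d).comp continuous_snd))
  have hfr : ∀ q, f q ∈ T.baseSet := fun q =>
    him _ ⟨iclamp_mem hab _, iclamp_mem hcd _⟩
  have hcorner : (a, c) ∈ Icc a b ×ˢ Icc c d := ⟨⟨le_rfl, hab⟩, ⟨le_rfl, hcd⟩⟩
  have heT : e ∈ T.source := T.mem_source.2 (by rw [he]; exact him _ hcorner)
  obtain ⟨g, hg, hpg, hge⟩ := T.exists_lift hfc hfr e heT
  refine ⟨g, hg, fun q hq => ?_, ?_⟩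
  · have : f q = H q := by
      rw [hf]; simp only [iclamp_of_mem hq.1, iclamp_of_mem hq.2]
    rw [hpg q, this]
  · apply hge
    rw [hf]; simp only
    rw [iclamp_of_mem ⟨le_rfl, hab⟩, iclamp_of_mem ⟨le_rfl, hcd⟩, he]

lemma image_val_Icc (c d : I) : (Subtype.val '' (Icc c d : Set I)) = Icc (c : ℝ) (d : ℝ) := by
  ext x
  constructor
  · rintro ⟨t, ⟨h1, h2⟩, rfl⟩
    exact ⟨h1, h2⟩
  · rintro ⟨h1, h2⟩
    exact ⟨⟨x, ⟨c.2.1.trans h1, h2.trans d.2.2⟩⟩, ⟨h1, h2⟩, rfl⟩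

lemma isPreconnected_Icc_I (c d : I) : IsPreconnected (Icc c d : Set I) := by
  rw [← Topology.IsInducing.subtypeVal.isPreconnected_image, image_val_Icc]
  exact isPreconnected_Icc

lemma RectLift.glue_horiz (hp : IsCoveringMap p) {a b b' c d : I}
    (hab : a ≤ b) (hbb : b ≤ b') (hcd : c ≤ d)
    (h₁ : RectLift p H a b c d) (h₂ : RectLift p H b b' c d) : RectLift p H a b' c d := by
  intro e he
  obtain ⟨G₁, hG₁, hpG₁, hG₁c⟩ := h₁ e he
  have hb_mem : (b, c) ∈ Icc a b ×ˢ Icc c d := ⟨⟨hab, le_rfl⟩, ⟨le_rfl, hcd⟩⟩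
  obtain ⟨G₂, hG₂, hpG₂, hG₂c⟩ := h₂ (G₁ (b, c)) (hpG₁ _ hb_mem)
  -- the two lifts agree on the common edge
  have hedge : EqOn G₁ G₂ ({b} ×ˢ Icc c d) := by
    apply hp.eqOn_of_comp_eqOn
      ((isPreconnected_singleton (x := b)).prod (isPreconnected_Icc_I c d))
      hG₁.continuousOn hG₂.continuousOn
    · intro q hq
      obtain ⟨hq1, hq2⟩ := hq
      rw [mem_singleton_iff] at hq1
      have m1 : q ∈ Icc a b ×ˢ Icc c d := ⟨⟨hq1 ▸ hab, hq1.le⟩, hq2⟩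
      have m2 : q ∈ Icc b b' ×ˢ Icc c d := ⟨⟨hq1.ge, hq1 ▸ hbb⟩, hq2⟩
      show p (G₁ q) = p (G₂ q)
      rw [hpG₁ q m1, hpG₂ q m2]
    · show ((b, c) : I × I) ∈ ({b} ×ˢ Icc c d : Set (I × I))
      exact ⟨rfl, ⟨le_rfl, hcd⟩⟩
    · exact hG₂c.symm
  refine ⟨fun q => if q.1 ≤ b then G₁ (q.1, iclamp c d q.2) else G₂ (q.1, iclamp c d q.2),
    ?_, ?_, ?_⟩
  · apply Continuous.if_le
      (hG₁.comp (continuous_fst.prodMk ((continuous_iclamp c d).comp continuous_snd)))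
      (hG₂.comp (continuous_fst.prodMk ((continuous_iclamp c d).comp continuous_snd)))
      continuous_fst continuous_const
    intro q hq
    exact hedge ⟨hq, iclamp_mem hcd q.2⟩
  · rintro ⟨s, t⟩ ⟨⟨hs1, hs2⟩, ht⟩
    simp only [iclamp_of_mem ht]
    by_cases hsb : s ≤ b
    · rw [if_pos hsb]
      exact hpG₁ _ ⟨⟨hs1, hsb⟩, ht⟩
    · rw [if_neg hsb]
      exact hpG₂ _ ⟨⟨(not_le.1 hsb).le, hs2⟩, ht⟩
  · simp only [if_pos hab, iclamp_of_mem (left_mem_Icc.2 hcd)]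
    exact hG₁c

lemma RectLift.glue_vert (hp : IsCoveringMap p) {a b c d d' : I}
    (hab : a ≤ b) (hcd : c ≤ d) (hdd : d ≤ d')
    (h₁ : RectLift p H a b c d) (h₂ : RectLift p H a b d d') : RectLift p H a b c d' := by
  intro e he
  obtain ⟨G₁, hG₁, hpG₁, hG₁c⟩ := h₁ e he
  have hd_mem : (a, d) ∈ Icc a b ×ˢ Icc c d := ⟨⟨le_rfl, hab⟩, ⟨hcd, le_rfl⟩⟩
  obtain ⟨G₂, hG₂, hpG₂, hG₂c⟩ := h₂ (G₁ (a, d)) (hpG₁ _ hd_mem)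
  have hedge : EqOn G₁ G₂ (Icc a b ×ˢ {d}) := by
    apply hp.eqOn_of_comp_eqOn
      ((isPreconnected_Icc_I a b).prod (isPreconnected_singleton (x := d)))
      hG₁.continuousOn hG₂.continuousOn
    · intro q hq
      obtain ⟨hq1, hq2⟩ := hq
      rw [mem_singleton_iff] at hq2
      have m1 : q ∈ Icc a b ×ˢ Icc c d := ⟨hq1, ⟨hq2 ▸ hcd, hq2.le⟩⟩
      have m2 : q ∈ Icc a b ×ˢ Icc d d' := ⟨hq1, ⟨hq2.ge, hq2 ▸ hdd⟩⟩
      show p (G₁ q) = p (G₂ q)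
      rw [hpG₁ q m1, hpG₂ q m2]
    · show ((a, d) : I × I) ∈ (Icc a b ×ˢ {d} : Set (I × I))
      exact ⟨⟨le_rfl, hab⟩, rfl⟩
    · exact hG₂c.symm
  refine ⟨fun q => if q.2 ≤ d then G₁ (iclamp a b q.1, q.2) else G₂ (iclamp a b q.1, q.2),
    ?_, ?_, ?_⟩
  · apply Continuous.if_le
      (hG₁.comp (((continuous_iclamp a b).comp continuous_fst).prodMk continuous_snd))
      (hG₂.comp (((continuous_iclamp a b).comp continuous_fst).prodMk continuous_snd))
      continuous_snd continuous_const
    intro q hq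
    exact hedge ⟨iclamp_mem hab q.1, hq⟩
  · rintro ⟨s, t⟩ ⟨hs, ⟨ht1, ht2⟩⟩
    simp only [iclamp_of_mem hs]
    by_cases htd : t ≤ d
    · rw [if_pos htd]
      exact hpG₁ _ ⟨hs, ⟨ht1, htd⟩⟩
    · rw [if_neg htd]
      exact hpG₂ _ ⟨hs, ⟨(not_le.1 htd).le, ht2⟩⟩
  · simp only [if_pos hcd, iclamp_of_mem (left_mem_Icc.2 hab)]
    exact hG₁c

end Lift


/-- grid points in the unit interval -/
noncomputable def ugrid (n i : ℕ) : I := Set.projIcc 0 1 zero_le_one ((i : ℝ) / n)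

lemma ugrid_zero (n : ℕ) : ugrid n 0 = 0 := by
  simp only [ugrid, Nat.cast_zero, zero_div]
  exact Set.projIcc_left _

lemma ugrid_last {n : ℕ} (hn : 0 < n) : ugrid n n = 1 := by
  have h : ((n : ℝ)) / n = 1 := div_self (by positivity)
  simp only [ugrid, h]
  exact Set.projIcc_right _

lemma ugrid_mono {n : ℕ} {i j : ℕ} (h : i ≤ j) : ugrid n i ≤ ugrid n j := by
  apply Set.monotone_projIcc
  gcongr


lemma ugrid_step {n : ℕ} (hn : 0 < n) (i : ℕ) :
    (ugrid n (i + 1) : ℝ) - ugrid n i ≤ 1 / n := by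
  have lip := (LipschitzWith.projIcc (a := (0:ℝ)) (b := 1) zero_le_one).dist_le_mul
    (((i : ℝ) + 1) / n) ((i : ℝ) / n)
  have hdist : dist (((i : ℝ) + 1) / n) ((i : ℝ) / n) = 1 / n := by
    rw [Real.dist_eq, div_sub_div_same]
    simp only [add_sub_cancel_left]
    rw [abs_of_nonneg (by positivity)]
  have key : dist (ugrid n (i + 1)) (ugrid n i) ≤ 1 / n := by
    simpa [ugrid, hdist, Nat.cast_add, Nat.cast_one] using lip
  calc (ugrid n (i + 1) : ℝ) - ugrid n i ≤ |(ugrid n (i + 1) : ℝ) - ugrid n i| := le_abs_self _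
    _ = dist (ugrid n (i + 1)) (ugrid n i) := by rw [Subtype.dist_eq, Real.dist_eq]
    _ ≤ 1 / n := key

theorem IsCoveringMap.exists_square_lift (hp : IsCoveringMap p) {H : I × I → X}
    (hH : Continuous H) (e : E) (he : p e = H (0, 0)) :
    ∃ G : I × I → E, Continuous G ∧ (∀ q, p (G q) = H q) ∧ G (0, 0) = e := by
  obtain ⟨δ, δpos, hδ⟩ := lebesgue_number_lemma_of_metric
    (isCompact_univ : IsCompact (univ : Set (I × I)))
    (c := fun y : X => H ⁻¹' (hp y).2.choose)
    (fun y => (hp y).2.choose_spec.2.1.preimage hH)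
    (fun q _ => Set.mem_iUnion.2 ⟨H q, (hp (H q)).2.choose_spec.1⟩)
  obtain ⟨m, hm⟩ := exists_nat_one_div_lt δpos
  set n := m + 1 with hn_def
  have hn : 0 < n := Nat.succ_pos m
  have hinv : (1 : ℝ) / n < δ := by exact_mod_cast hm
  have small : ∀ i j : ℕ, i < n → j < n →
      RectLift p H (ugrid n i) (ugrid n (i + 1)) (ugrid n j) (ugrid n (j + 1)) := by
    intro i j hi hj
    obtain ⟨y, hy⟩ := hδ (ugrid n i, ugrid n j) trivial
    intro e he
    have hcen : H (ugrid n i, ugrid n j) ∈ (hp y).2.choose := hy (Metric.mem_ball_self δpos)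
    haveI : Nonempty (p ⁻¹' {y}) :=
      ⟨((hp y).2.choose_spec.2.2.2.choose ⟨e, show p e ∈ _ from he ▸ hcen⟩).2⟩
    have hbase : (hp y).toTrivialization.baseSet = (hp y).2.choose := rfl
    refine rectLift_of_baseSet ((hp y).toTrivialization) hH
      (ugrid_mono i.le_succ) (ugrid_mono j.le_succ) ?_ e he
    intro q hq
    rw [hbase]
    apply hy
    rw [Metric.mem_ball, Prod.dist_eq]
    have h1 : dist q.1 (ugrid n i) ≤ 1 / n := by
      rw [Subtype.dist_eq, Real.dist_eq, abs_of_nonneg (sub_nonneg.2 (Subtype.coe_le_coe.2 hq.1.1))]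
      have := ugrid_step hn i
      have h2 : (q.1 : ℝ) ≤ ugrid n (i + 1) := hq.1.2
      linarith
    have h2 : dist q.2 (ugrid n j) ≤ 1 / n := by
      rw [Subtype.dist_eq, Real.dist_eq, abs_of_nonneg (sub_nonneg.2 (Subtype.coe_le_coe.2 hq.2.1))]
      have := ugrid_step hn j
      have h2 : (q.2 : ℝ) ≤ ugrid n (j + 1) := hq.2.2
      linarith
    exact lt_of_le_of_lt (max_le h1 h2) hinv
  have row : ∀ j, j < n → ∀ i, i ≤ n →
      RectLift p H (ugrid n 0) (ugrid n i) (ugrid n j) (ugrid n (j + 1)) := by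
    intro j hj i hi
    induction i with
    | zero => exact (small 0 j hn hj).mono (ugrid_mono (Nat.zero_le 1)) le_rfl
    | succ k ih =>
        exact RectLift.glue_horiz hp (ugrid_mono (Nat.zero_le k)) (ugrid_mono k.le_succ)
          (ugrid_mono j.le_succ) (ih (Nat.le_of_succ_le hi)) (small k j hi hj)
  have col : ∀ j, j ≤ n → RectLift p H (ugrid n 0) (ugrid n n) (ugrid n 0) (ugrid n j) := by
    intro j hj
    induction j with
    | zero => exact (row 0 hn n le_rfl).mono le_rfl (ugrid_mono (Nat.zero_le 1))
    | succ k ih =>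
        exact RectLift.glue_vert hp (ugrid_mono (Nat.zero_le n)) (ugrid_mono (Nat.zero_le k))
          (ugrid_mono k.le_succ) (ih (Nat.le_of_succ_le hj)) (row k hj n le_rfl)
  have main := col n le_rfl
  rw [ugrid_zero, ugrid_last hn] at main
  obtain ⟨G, hG, hpG, hGc⟩ := main e he
  exact ⟨G, hG, fun q => hpG q ⟨⟨nonneg', le_one'⟩, ⟨nonneg', le_one'⟩⟩, hGc⟩

theorem IsCoveringMap.exists_path_lift (hp : IsCoveringMap p) {γ : I → X}
    (hγ : Continuous γ) (e : E) (he : p e = γ 0) :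
    ∃ Γ : I → E, Continuous Γ ∧ (∀ t, p (Γ t) = γ t) ∧ Γ 0 = e := by
  obtain ⟨G, hG, hpG, hGc⟩ := hp.exists_square_lift (H := fun q => γ q.2)
    (hγ.comp continuous_snd) e he
  exact ⟨fun t => G (0, t), hG.comp (continuous_const.prodMk continuous_id),
    fun t => hpG (0, t), hGc⟩

/-- Monodromy: lifts of homotopic paths starting at the same point end at the same point. -/
theorem IsCoveringMap.monodromy' (hp : IsCoveringMap p) {x₀ x₁ : X} {γ₀ γ₁ : Path x₀ x₁}
    (h : γ₀.Homotopic γ₁) {Γ₀ Γ₁ : I → E} (h₀c : Continuous Γ₀) (h₁c : Continuous Γ₁)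
    (hp₀ : ∀ t, p (Γ₀ t) = γ₀ t) (hp₁ : ∀ t, p (Γ₁ t) = γ₁ t) (h00 : Γ₀ 0 = Γ₁ 0) :
    Γ₀ 1 = Γ₁ 1 := by
  obtain ⟨F⟩ := h
  have hFc : Continuous fun q : I × I => F q := F.continuous
  have he : p (Γ₀ 0) = F (0, 0) := by
    rw [hp₀ 0, F.apply_zero]
    rfl
  obtain ⟨G, hG, hpG, hGc⟩ := hp.exists_square_lift hFc (Γ₀ 0) he
  -- bottom edge is constant
  have hbot : ∀ s : I, G (s, 0) = G (0, 0) := by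
    have := hp.const_of_comp (A := I)
      (hG.comp (continuous_id.prodMk continuous_const))
      (g := fun s => G (s, 0)) ?_
    · intro s; exact this s 0
    · intro s s'
      show p (G (s, 0)) = p (G (s', 0))
      rw [hpG (s, 0), hpG (s', 0), F.source, F.source]
  -- top edge is constant
  have htop : ∀ s : I, G (s, 1) = G (0, 1) := by
    have := hp.const_of_comp (A := I)
      (hG.comp (continuous_id.prodMk continuous_const))
      (g := fun s => G (s, 1)) ?_
    · intro s; exact this s 0
    · intro s s'
      show p (G (s, 1)) = p (G (s', 1))
      rw [hpG (s, 1), hpG (s', 1), F.target, F.target]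
  -- left edge is Γ₀
  have hleft : (fun t => G (0, t)) = Γ₀ := by
    apply hp.eq_of_comp_eq (A := I)
      (hG.comp (continuous_const.prodMk continuous_id)) h₀c ?_ 0 hGc
    funext t
    show p (G (0, t)) = p (Γ₀ t)
    rw [hpG (0, t), hp₀ t, F.apply_zero]
    rfl
  -- right edge is Γ₁
  have hright : (fun t => G (1, t)) = Γ₁ := by
    apply hp.eq_of_comp_eq (A := I)
      (hG.comp (continuous_const.prodMk continuous_id)) h₁c ?_ 0
    · show G (1, 0) = Γ₁ 0
      rw [hbot 1, hGc, h00]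
    · funext t
      show p (G (1, t)) = p (Γ₁ t)
      rw [hpG (1, t), hp₁ t, F.apply_one]
      rfl
  calc Γ₀ 1 = G (0, 1) := by rw [← hleft]
    _ = G (1, 1) := (htop 1).symm
    _ = Γ₁ 1 := by rw [← hright]

end LiftingMachinery

lemma edist_le_pathELength {X : Type*} [PseudoEMetricSpace X] (γ : unitInterval → X) (s t : I) :
    edist (γ s) (γ t) ≤ pathELength γ :=
  eVariationOn.edist_le γ (mem_univ s) (mem_univ t)

lemma Icc_zero_one_eq_univ : (Icc 0 1 : Set I) = univ :=
  eq_univ_of_forall fun t => ⟨nonneg', le_one'⟩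

lemma pathELength_symm {X : Type*} [PseudoEMetricSpace X] {x y : X} (γ : Path x y) :
    pathELength (fun t => γ.symm t) = pathELength (fun t => γ t) := by
  have h1 : (fun t => γ.symm t) = (fun t => γ t) ∘ unitInterval.symm := by
    funext t; simp [Path.symm_apply]
  rw [h1]
  show eVariationOn _ _ = _
  rw [eVariationOn.comp_eq_of_antitoneOn (fun t => γ t) unitInterval.symm
    (fun a _ b _ hab => by
      have h : (a : ℝ) ≤ b := hab
      rw [← Subtype.coe_le_coe]
      simp only [unitInterval.coe_symm_eq]
      linarith)]
  congr 1
  rw [image_univ]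
  exact range_eq_univ.2 fun t => ⟨unitInterval.symm t, unitInterval.symm_symm t⟩

lemma pathELength_trans_le {X : Type*} [PseudoEMetricSpace X] {x y z : X}
    (γ : Path x y) (δ : Path y z) :
    pathELength (fun t => (γ.trans δ) t) ≤
      pathELength (fun t => γ t) + pathELength (fun t => δ t) := by
  set f : I → X := fun t => (γ.trans δ) t with hf
  set half : I := ⟨1 / 2, by norm_num⟩ with hhalf
  have key : eVariationOn f (Icc 0 half) + eVariationOn f (Icc half 1)
      = eVariationOn f univ := by
    have := eVariationOn.Icc_add_Icc f (s := univ) (a := 0) (b := half) (c := 1)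
      (by rw [← Subtype.coe_le_coe]; norm_num [hhalf])
      (by rw [← Subtype.coe_le_coe]; norm_num [hhalf]) (mem_univ half)
    simpa [Icc_zero_one_eq_univ] using this
  rw [show pathELength f = eVariationOn f univ from rfl, ← key]
  gcongr
  · -- first half
    set φ : I → I := fun t => ⟨min (2 * (t : ℝ)) 1,
      ⟨le_min (by have := t.2.1; linarith) zero_le_one, min_le_right _ _⟩⟩ with hφ
    have heq : EqOn f ((fun t => γ t) ∘ φ) (Icc 0 half) := by
      intro t ht
      have ht2 : (t : ℝ) ≤ 1 / 2 := ht.2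
      have h2t : 2 * (t : ℝ) ≤ 1 := by linarith
      show (γ.trans δ) t = γ (φ t)
      rw [Path.trans_apply, dif_pos ht2]
      congr 1
      exact Subtype.ext (by simp [hφ, min_eq_left h2t])
    rw [eVariationOn.eq_of_eqOn heq]
    apply eVariationOn.comp_le_of_monotoneOn _ φ
    · intro a _ b _ hab
      rw [← Subtype.coe_le_coe] at hab ⊢
      exact min_le_min (by linarith) le_rfl
    · exact fun t _ => mem_univ _
  · -- second half
    set ψ : I → I := fun t => ⟨max (2 * (t : ℝ) - 1) 0,
      ⟨le_max_right _ _, max_le (by have := t.2.2; linarith) zero_le_one⟩⟩ with hψ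
    have heq : EqOn f ((fun t => δ t) ∘ ψ) (Icc half 1) := by
      intro t ht
      have ht1 : (1 : ℝ) / 2 ≤ (t : ℝ) := ht.1
      show (γ.trans δ) t = δ (ψ t)
      rw [Path.trans_apply]
      split_ifs with h
      · have hteq : (t : ℝ) = 1 / 2 := le_antisymm h ht1
        have h2 : ψ t = 0 := Subtype.ext (by simp [hψ, hteq])
        have key : ∀ (u : I), (u : ℝ) = 1 → γ u = δ (ψ t) := by
          intro u hu
          have hu1 : u = 1 := Subtype.ext (by simpa using hu)
          rw [hu1, γ.target, h2, δ.source]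
        exact key _ (by show (2 : ℝ) * t = 1; rw [hteq]; norm_num)
      · congr 1
        exact Subtype.ext (by
          simp only [hψ]
          rw [max_eq_left (by push_neg at h; linarith)])
    rw [eVariationOn.eq_of_eqOn heq]
    apply eVariationOn.comp_le_of_monotoneOn _ ψ
    · intro a _ b _ hab
      rw [← Subtype.coe_le_coe] at hab ⊢
      exact max_le_max (by linarith) le_rfl
    · exact fun t _ => mem_univ _



lemma lifted_nonexpanding {E X : Type*} [MetricSpace E] [MetricSpace X] {p : E → X}
    (hpc : Continuous p) (hlift : IsLiftedMetric p) (a b : E) :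
    edist (p a) (p b) ≤ edist a b := by
  rw [hlift.1 a b]
  refine le_iInf fun γ => ?_
  have h0 : (γ.map hpc) 0 = p a := (γ.map hpc).source
  have h1 : (γ.map hpc) 1 = p b := (γ.map hpc).target
  have h2 := edist_le_pathELength (fun t => (γ.map hpc) t) 0 1
  rw [h0, h1] at h2
  refine h2.trans (le_of_eq ?_)
  have h3 : (fun t => (γ.map hpc) t) = p ∘ (fun t => γ t) := by
    funext t; rfl
  rw [h3, hlift.2 _ γ.continuous]

lemma homotopic_of_trans_symm {Y : Type*} [TopologicalSpace Y] {x y : Y} {g q : Path x y}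
    (h : (g.trans q.symm).Homotopic (Path.refl x)) : g.Homotopic q := by
  have h1 : g.Homotopic (g.trans (Path.refl y)) := (Path.Homotopic.refl _).symm.trans
    (Path.Homotopic.symm ⟨Path.Homotopy.transRefl g⟩)
  have h2 : (g.trans (Path.refl y)).Homotopic (g.trans (q.symm.trans q)) :=
    Path.Homotopic.hcomp (Path.Homotopic.refl g) ⟨Path.Homotopy.reflSymmTrans q⟩
  have h3 : (g.trans (q.symm.trans q)).Homotopic ((g.trans q.symm).trans q) :=
    Path.Homotopic.symm ⟨Path.Homotopy.transAssoc g q.symm q⟩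
  have h4 : ((g.trans q.symm).trans q).Homotopic ((Path.refl x).trans q) :=
    Path.Homotopic.hcomp h (Path.Homotopic.refl q)
  have h5 : ((Path.refl x).trans q).Homotopic q := ⟨Path.Homotopy.reflTrans q⟩
  exact h1.trans (h2.trans (h3.trans (h4.trans h5)))

lemma systole_le_of_not_nullhomotopic {Y : Type*} [MetricSpace Y] {z : Y} {γ : Path z z}
    (h : ¬ γ.Homotopic (Path.refl z)) : systole Y ≤ pathELength (fun t => γ t) :=
  sInf_le ⟨z, γ, h, rfl⟩


/-- for a compact connected finite CW complex `X` with a geodesic metric, a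
covering map `p : X̃ → X` with a lifted metric, and any radius `r < sys(X)/4`, the restriction
of `p` to any ball `B(x̃, r)` is an isometry onto `B(p(x̃), r)`. -/
theorem covering_isometry_on_small_balls
    {X Xt : Type} [MetricSpace X] [MetricSpace Xt]
    [CompactSpace X] [ConnectedSpace X]
    (hcw : IsFiniteCWComplex X) (hgeo : IsGeodesicMetric X)
    (p : Xt → X) (hp : IsCoveringMap p) (hlift : IsLiftedMetric p)
    (r : ℝ) (hr : ENNReal.ofReal (4 * r) < systole X)
    (xt : Xt) (x : X) (hx : p xt = x) :
    Set.BijOn p (Metric.ball xt r) (Metric.ball x r) ∧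
    ∀ a ∈ Metric.ball xt r, ∀ b ∈ Metric.ball xt r, dist (p a) (p b) = dist a b := by
  subst hx
  have hnon : ∀ a b : Xt, edist (p a) (p b) ≤ edist a b :=
    lifted_nonexpanding hp.continuous hlift
  have hnond : ∀ a b : Xt, dist (p a) (p b) ≤ dist a b := by
    intro a b
    have h := hnon a b
    rw [edist_dist, edist_dist] at h
    exact (ENNReal.ofReal_le_ofReal_iff dist_nonneg).1 h
  have hiso : ∀ a ∈ Metric.ball xt r, ∀ b ∈ Metric.ball xt r, dist (p a) (p b) = dist a b := by
    intro a ha b hb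
    refine le_antisymm (hnond a b) ?_
    have hrpos : 0 < r := Metric.pos_of_mem_ball ha
    rw [Metric.mem_ball] at ha hb
    have hab : dist a b < 2 * r := by
      have h1 := dist_triangle a xt b
      have h2 : dist xt b = dist b xt := dist_comm _ _
      linarith
    have hedist : edist a b < ENNReal.ofReal (2 * r) := by
      rw [edist_dist]
      exact (ENNReal.ofReal_lt_ofReal_iff (by linarith)).2 hab
    have hedist' : (⨅ γ : Path a b, pathELength (fun t => γ t)) < ENNReal.ofReal (2 * r) := by
      rw [← hlift.1 a b]; exact hedist
    obtain ⟨δ, hδ⟩ := iInf_lt_iff.1 hedist'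
    set pδ : Path (p a) (p b) := δ.map hp.continuous with hpδ
    have hlenpδ : pathELength (fun t => pδ t) = pathELength (fun t => δ t) := by
      have h1 : (fun t => pδ t) = p ∘ (fun t => δ t) := by funext t; rfl
      rw [h1, hlift.2 _ δ.continuous]
    obtain ⟨g, hg⟩ := hgeo (p a) (p b)
    have hlenloop : pathELength (fun t => (g.trans pδ.symm) t) < systole X := by
      refine lt_of_le_of_lt (pathELength_trans_le g pδ.symm) (lt_trans ?_ hr)
      rw [pathELength_symm pδ, hg, hlenpδ]
      have h1 : edist (p a) (p b) < ENNReal.ofReal (2 * r) := (hnon a b).trans_lt hedist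
      have h2 : pathELength (fun t => δ t) < ENNReal.ofReal (2 * r) := hδ
      calc edist (p a) (p b) + pathELength (fun t => δ t)
          < ENNReal.ofReal (2 * r) + ENNReal.ofReal (2 * r) := ENNReal.add_lt_add h1 h2
        _ = ENNReal.ofReal (4 * r) := by
            rw [← ENNReal.ofReal_add (by linarith) (by linarith)]
            ring_nf
    have hnull : (g.trans pδ.symm).Homotopic (Path.refl (p a)) := by
      by_contra hcon
      exact absurd (systole_le_of_not_nullhomotopic hcon) (not_le.2 hlenloop)
    have hghom : g.Homotopic pδ := homotopic_of_trans_symm hnull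
    obtain ⟨Γ, hΓc, hΓp, hΓ0⟩ := hp.exists_path_lift g.continuous a g.source.symm
    have hend : Γ 1 = δ 1 :=
      hp.monodromy' hghom hΓc δ.continuous hΓp (fun t => rfl) (by rw [hΓ0, δ.source])
    have hb' : Γ 1 = b := hend.trans δ.target
    have hkey : edist a b ≤ edist (p a) (p b) := by
      calc edist a b = edist (Γ 0) (Γ 1) := by rw [hΓ0, hb']
        _ ≤ pathELength Γ := edist_le_pathELength Γ 0 1
        _ = pathELength (p ∘ Γ) := (hlift.2 Γ hΓc).symm
        _ = pathELength (fun t => g t) := by congr 1; funext t; exact hΓp t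
        _ = edist (p a) (p b) := hg
    rw [edist_dist, edist_dist] at hkey
    exact (ENNReal.ofReal_le_ofReal_iff dist_nonneg).1 hkey
  refine ⟨⟨?_, ?_, ?_⟩, hiso⟩
  · intro a ha
    rw [Metric.mem_ball] at ha ⊢
    exact lt_of_le_of_lt (hnond a xt) ha
  · intro a ha b hb hab
    have h := hiso a ha b hb
    rw [hab, dist_self] at h
    exact eq_of_dist_eq_zero h.symm
  · intro y hy
    rw [Metric.mem_ball] at hy
    obtain ⟨g, hg⟩ := hgeo (p xt) y
    obtain ⟨Γ, hΓc, hΓp, hΓ0⟩ := hp.exists_path_lift g.continuous xt g.source.symm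
    have hkey : edist xt (Γ 1) ≤ edist (p xt) y := by
      calc edist xt (Γ 1) = edist (Γ 0) (Γ 1) := by rw [hΓ0]
        _ ≤ pathELength Γ := edist_le_pathELength Γ 0 1
        _ = pathELength (p ∘ Γ) := (hlift.2 Γ hΓc).symm
        _ = pathELength (fun t => g t) := by congr 1; funext t; exact hΓp t
        _ = edist (p xt) y := hg
    rw [edist_dist, edist_dist] at hkey
    have hd : dist xt (Γ 1) ≤ dist (p xt) y := (ENNReal.ofReal_le_ofReal_iff dist_nonneg).1 hkey
    refine ⟨Γ 1, ?_, ?_⟩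
    · rw [Metric.mem_ball, dist_comm]
      calc dist xt (Γ 1) ≤ dist (p xt) y := hd
        _ = dist y (p xt) := dist_comm _ _
        _ < r := hy
    · show p (Γ 1) = y
      rw [hΓp 1, g.target]


end
end

section
/- Let (𝒥, d) be a compact metric space with diam(𝒥) > 0 and f : 𝒥 → 𝒥 a map, and suppose there exist constants 0 < θ < 1 and 0 < r₀ < diam(𝒥) such that for every x ∈ 𝒥 and every 0 < r < r₀: f(B(x, r)) = B(f(x), θ⁻¹·r), and d(f(a), f(b)) = θ⁻¹·d(a, b) for all a, b ∈ B(x, r). Then (𝒥, d) is approximately self-similar: there exists L ≥ 1 such that for every z ∈ 𝒥 and every 0 < r < diam(𝒥) there exist an open set U ⊆ 𝒥 and a bijection h : B(z, r) → U with (1/L)·d(a, b)/r ≤ d(h(a), h(b)) ≤ L·d(a, b)/r for all a, b ∈ B(z, r). -/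
lemma iter_homothety_aux {J : Type*} [MetricSpace J]
    (f : J → J) (θ r₀ : ℝ) (hθ0 : 0 < θ)
    (hball : ∀ (x : J) (r : ℝ), 0 < r → r < r₀ →
      f '' Metric.ball x r = Metric.ball (f x) (θ⁻¹ * r) ∧
      ∀ a ∈ Metric.ball x r, ∀ b ∈ Metric.ball x r,
        dist (f a) (f b) = θ⁻¹ * dist a b)
    (z : J) (r : ℝ) (hr : 0 < r) :
    ∀ n : ℕ, (∀ k < n, θ⁻¹ ^ k * r < r₀) →
      (f^[n] '' Metric.ball z r = Metric.ball (f^[n] z) (θ⁻¹ ^ n * r) ∧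
       ∀ a ∈ Metric.ball z r, ∀ b ∈ Metric.ball z r,
         dist (f^[n] a) (f^[n] b) = θ⁻¹ ^ n * dist a b) := by
  have hθinv : 0 < θ⁻¹ := inv_pos.mpr hθ0
  intro n
  induction n with
  | zero => intro _; simp
  | succ n IH =>
    intro hk
    obtain ⟨himg, hd⟩ := IH (fun k hk' => hk k (Nat.lt_succ_of_lt hk'))
    set s : ℝ := θ⁻¹ ^ n * r with hs
    have hspos : 0 < s := mul_pos (pow_pos hθinv n) hr
    have hslt : s < r₀ := hk n (Nat.lt_succ_self n)
    obtain ⟨himg', hd'⟩ := hball (f^[n] z) s hspos hslt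
    have hmem : ∀ a ∈ Metric.ball z r, f^[n] a ∈ Metric.ball (f^[n] z) s := by
      intro a ha
      have hz : z ∈ Metric.ball z r := Metric.mem_ball_self hr
      have := hd a ha z hz
      rw [Metric.mem_ball, this]
      exact (mul_lt_mul_iff_right₀ (pow_pos hθinv n)).mpr (Metric.mem_ball.mp ha)
    constructor
    · rw [Function.iterate_succ', Set.image_comp, himg, himg']
      simp only [Function.comp_apply]
      rw [hs, pow_succ]
      ring_nf
    · intro a ha b hb
      rw [Function.iterate_succ_apply', Function.iterate_succ_apply',
        hd' _ (hmem a ha) _ (hmem b hb), hd a ha b hb, pow_succ]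
      ring

/-- Suppose `(𝒥, d)` is a compact metric space of positive diameter and `f : 𝒥 → 𝒥` is such that,
for some `0 < θ < 1` and `0 < r₀ < diam 𝒥`, every ball of radius `r < r₀` is mapped by `f` onto
the ball of radius `θ⁻¹ r` around the image of the center, with all distances scaled exactly by
`θ⁻¹`.  Then `(𝒥, d)` is approximately self-similar: there is `L ≥ 1` such that every rescaled
ball `(B(z,r), d/r)` with `0 < r < diam 𝒥` is `L`-bilipschitz equivalent to an open subset. -/
theorem approximately_self_similar_of_local_homothety
    {J : Type*} [MetricSpace J] [CompactSpace J]
    (hdiam : 0 < Metric.diam (Set.univ : Set J))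
    (f : J → J) (θ r₀ : ℝ) (hθ0 : 0 < θ) (hθ1 : θ < 1)
    (hr₀0 : 0 < r₀) (hr₀ : r₀ < Metric.diam (Set.univ : Set J))
    (hball : ∀ (x : J) (r : ℝ), 0 < r → r < r₀ →
      f '' Metric.ball x r = Metric.ball (f x) (θ⁻¹ * r) ∧
      ∀ a ∈ Metric.ball x r, ∀ b ∈ Metric.ball x r,
        dist (f a) (f b) = θ⁻¹ * dist a b) :
    ∃ L : ℝ, 1 ≤ L ∧ ∀ (z : J) (r : ℝ), 0 < r → r < Metric.diam (Set.univ : Set J) →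
      ∃ U : Set J, IsOpen U ∧ ∃ h : J → J, Set.BijOn h (Metric.ball z r) U ∧
        ∀ a ∈ Metric.ball z r, ∀ b ∈ Metric.ball z r,
          (1 / L) * (dist a b / r) ≤ dist (h a) (h b) ∧
          dist (h a) (h b) ≤ L * (dist a b / r) := by
  have hθinv : 0 < θ⁻¹ := inv_pos.mpr hθ0
  set D := Metric.diam (Set.univ : Set J) with hD
  set L : ℝ := max D (θ * r₀)⁻¹ with hL
  have hθr₀ : 0 < θ * r₀ := mul_pos hθ0 hr₀0
  have hL1 : 1 ≤ L := by
    rcases le_or_gt (θ * r₀) 1 with h | h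
    · exact le_trans (one_le_inv_iff₀.mpr ⟨hθr₀, h⟩) (le_max_right _ _)
    · refine le_trans ?_ (le_max_left _ _)
      have : θ * r₀ < r₀ := by nlinarith
      linarith
  have hLpos : 0 < L := lt_of_lt_of_le one_pos hL1
  refine ⟨L, hL1, fun z r hr hrD => ?_⟩
  -- find minimal n with θ * r₀ ≤ θ⁻¹ ^ n * r
  have hex : ∃ n : ℕ, θ * r₀ ≤ θ⁻¹ ^ n * r := by
    obtain ⟨n, hn⟩ := exists_pow_lt_of_lt_one (div_pos hr hθr₀) hθ1
    refine ⟨n, ?_⟩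
    have h2 : θ ^ n * (θ * r₀) < r := by
      have := (mul_lt_mul_iff_left₀ hθr₀).mpr hn
      rwa [div_mul_cancel₀ _ (ne_of_gt hθr₀)] at this
    have h3 : (0:ℝ) < θ ^ n := pow_pos hθ0 n
    rw [inv_pow, inv_mul_eq_div, le_div_iff₀ h3]
    nlinarith
  classical
  set n := Nat.find hex with hn
  have hns : θ * r₀ ≤ θ⁻¹ ^ n * r := Nat.find_spec hex
  have hlt : ∀ k < n, θ⁻¹ ^ k * r < θ * r₀ := by
    intro k hk
    exact lt_of_not_ge (Nat.find_min hex hk)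
  have hltr₀ : ∀ k < n, θ⁻¹ ^ k * r < r₀ := by
    intro k hk
    have : θ * r₀ < r₀ := by nlinarith
    linarith [hlt k hk]
  obtain ⟨himg, hd⟩ := iter_homothety_aux f θ r₀ hθ0 hball z r hr n hltr₀
  set s : ℝ := θ⁻¹ ^ n * r with hs
  have hspos : 0 < s := mul_pos (pow_pos hθinv n) hr
  have hsD : s < D := by
    rcases Nat.eq_zero_or_pos n with h0 | h0
    · simpa [hs, h0] using hrD
    · obtain ⟨m, hm'⟩ := Nat.exists_eq_succ_of_ne_zero (ne_of_gt h0)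
      have hm := hlt m (by omega)
      have : s = θ⁻¹ * (θ⁻¹ ^ m * r) := by rw [hs, hm', pow_succ]; ring
      rw [this]
      calc θ⁻¹ * (θ⁻¹ ^ m * r) < θ⁻¹ * (θ * r₀) := (mul_lt_mul_iff_right₀ hθinv).mpr hm
        _ = r₀ := by field_simp
        _ < D := hr₀
  refine ⟨Metric.ball (f^[n] z) s, Metric.isOpen_ball, f^[n], ?_, ?_⟩
  · refine ⟨fun a ha => ?_, fun a ha b hb hab => ?_, fun u hu => ?_⟩
    · rw [← himg]; exact Set.mem_image_of_mem _ ha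
    · have := hd a ha b hb
      rw [hab, dist_self] at this
      have h0 : dist a b = 0 := by
        have hp : (0:ℝ) < θ⁻¹ ^ n := pow_pos hθinv n
        nlinarith [dist_nonneg (x := a) (y := b)]
      exact dist_eq_zero.mp h0
    · rwa [← himg] at hu
  · intro a ha b hb
    have hdab := hd a ha b hb
    have hrw : dist (f^[n] a) (f^[n] b) = dist a b / r * s := by
      rw [hdab, hs]; field_simp
    have hdr : 0 ≤ dist a b / r := div_nonneg dist_nonneg (le_of_lt hr)
    constructor
    · rw [hrw]
      have h1 : 1 / L ≤ s := by
        have hinv : (θ * r₀)⁻¹ ≤ L := le_max_right _ _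
        have hc : θ * r₀ * (θ * r₀)⁻¹ = 1 := mul_inv_cancel₀ (ne_of_gt hθr₀)
        have h2 : 1 / L ≤ θ * r₀ := by
          rw [div_le_iff₀ hLpos]
          nlinarith [mul_le_mul_of_nonneg_left hinv (le_of_lt hθr₀)]
        linarith
      calc 1 / L * (dist a b / r) = dist a b / r * (1 / L) := by ring
        _ ≤ dist a b / r * s := mul_le_mul_of_nonneg_left h1 hdr
    · rw [hrw]
      have h2 : s ≤ L := le_trans (le_of_lt hsD) (le_max_left _ _)
      calc dist a b / r * s ≤ dist a b / r * L := mul_le_mul_of_nonneg_left h2 hdr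
        _ = L * (dist a b / r) := by ring
end

section
/- Let X be a topological space, S a finite family of subsets of X whose union is X, and q ≥ 1. Let c = Σᵢ wᵢ γᵢ be a weighted multi-curve on X with strands γᵢ : Jᵢ → X, and let d be a subdivision of c, with pieces δ_{i,k} = γᵢ ∘ a_{i,k}. Then: (a) mod_q(d, S) ≤ mod_q(c, S). (b) If moreover no piece δ_{i,k} has image contained in a single element of S, and there is a constant K such that for every s ∈ S and every strand index i the number of connected components of γᵢ⁻¹(s) is at most K, then mod_q(c, S) ≤ (2K)^q · mod_q(d, S). -/
open Set

noncomputable section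

attribute [local instance] Classical.propDecidable

/-- The domain of a curve: a closed interval or a circle. -/
inductive CurveDomain
  | interval
  | circle

/-- The underlying topological space of a curve domain. -/
def CurveDomain.space : CurveDomain → Type
  | .interval => unitInterval
  | .circle => AddCircle (1 : ℝ)

instance (d : CurveDomain) : TopologicalSpace d.space :=
  match d with
  | .interval => inferInstanceAs (TopologicalSpace unitInterval)
  | .circle => inferInstanceAs (TopologicalSpace (AddCircle (1 : ℝ)))

/-- A curve on `X`: a continuous map from a compact connected 1-manifold
(a closed interval or a circle) to `X`. -/
structure Curve (X : Type*) [TopologicalSpace X] where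
  dom : CurveDomain
  toFun : dom.space → X
  continuous : Continuous toFun

/-- A weighted multi-curve on `X`: a finite formal sum `Σᵢ wᵢ γᵢ` of curves with positive
real weights. -/
structure WMCurve (X : Type*) [TopologicalSpace X] where
  ι : Type
  fin : Fintype ι
  w : ι → ℝ
  w_pos : ∀ i, 0 < w i
  strand : ι → Curve X

attribute [instance] WMCurve.fin

variable {X : Type*} [TopologicalSpace X] {ι : Type} [Fintype ι]

/-- The `ρ`-length of a curve with respect to the finite family `S`: the sum of `ρ` over the
members of the family meeting the image of the curve. -/
def Curve.len (γ : Curve X) (S : ι → Set X) (ρ : ι → ℝ) : ℝ :=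
  ∑ i, if (Set.range γ.toFun ∩ S i).Nonempty then ρ i else 0

/-- The `ρ`-length of a weighted multi-curve. -/
def WMCurve.len (c : WMCurve X) (S : ι → Set X) (ρ : ι → ℝ) : ℝ :=
  ∑ j, c.w j * (c.strand j).len S ρ

/-- A test metric `ρ` is admissible for a family `Γ` of weighted multi-curves if it is
nonnegative and every member of `Γ` has `ρ`-length at least 1. -/
def Admissible (Γ : Set (WMCurve X)) (S : ι → Set X) (ρ : ι → ℝ) : Prop :=
  (∀ i, 0 ≤ ρ i) ∧ ∀ c ∈ Γ, 1 ≤ c.len S ρ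

/-- The combinatorial `q`-modulus of a family of weighted multi-curves with respect to the
finite family `S`. -/
def modulus (q : ℝ) (Γ : Set (WMCurve X)) (S : ι → Set X) : ℝ :=
  sInf {V | ∃ ρ : ι → ℝ, Admissible Γ S ρ ∧ V = ∑ i, ρ i ^ q}

/-- A single (unweighted) curve, regarded as a weighted multi-curve with one strand of
weight 1. -/
def Curve.toWMC (γ : Curve X) : WMCurve X :=
  ⟨PUnit, inferInstance, fun _ => 1, fun _ => one_pos, fun _ => γ⟩

/-- The combinatorial `q`-modulus of a family of curves. -/
def curveModulus (q : ℝ) (Γ : Set (Curve X)) (S : ι → Set X) : ℝ :=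
  modulus q (Curve.toWMC '' Γ) S



/-- The data of a subdivision of a weighted multi-curve `c`: for each strand `i`, finitely many
continuous maps `a i k` from closed intervals into the domain of the strand, whose images cover
the domain and pairwise overlap in at most single boundary points. -/
structure Subdivision {X : Type*} [TopologicalSpace X] (c : WMCurve X) where
  m : c.ι → ℕ
  a : ∀ i, Fin (m i) → (unitInterval → (c.strand i).dom.space)
  cont : ∀ i k, Continuous (a i k)
  covers : ∀ i, (⋃ k, Set.range (a i k)) = Set.univ
  overlap : ∀ i, ∀ k k' : Fin (m i), k ≠ k' →
    (Set.range (a i k) ∩ Set.range (a i k')).Subsingleton ∧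
    Set.range (a i k) ∩ Set.range (a i k') ⊆
      frontier (Set.range (a i k)) ∩ frontier (Set.range (a i k'))

/-- The subdivided weighted multi-curve: the piece indexed by `(i, k)` is
`γᵢ ∘ a_{i,k}` with weight `wᵢ`. -/
def Subdivision.curve {X : Type*} [TopologicalSpace X] {c : WMCurve X}
    (D : Subdivision c) : WMCurve X where
  ι := Σ i : c.ι, Fin (D.m i)
  fin := inferInstance
  w := fun p => c.w p.1
  w_pos := fun p => c.w_pos p.1
  strand := fun p =>
    ⟨.interval, (c.strand p.1).toFun ∘ D.a p.1 p.2,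
      (c.strand p.1).continuous.comp (D.cont p.1 p.2)⟩

namespace MSAux

local instance fact01 : Fact ((0:ℝ) < 1) := ⟨one_pos⟩

lemma icc_minmax {O : Set ℝ} (hO : O.OrdConnected) {x y : ℝ} (hx : x ∈ O) (hy : y ∈ O) :
    Icc (min x y) (max x y) ⊆ O := by
  rcases le_total x y with h | h
  · rw [min_eq_left h, max_eq_right h]; exact hO.out hx hy
  · rw [min_eq_right h, max_eq_left h]; exact hO.out hy hx

lemma pairLow {C O O' : Set ℝ} (hbb : BddBelow C)
    {x y x' y' : ℝ} (hx : x ∈ C) (hy : y ∉ C) (hx' : x' ∈ C) (hy' : y' ∉ C)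
    (hIcc : Icc (min x y) (max x y) ⊆ O) (hIcc' : Icc (min x' y') (max x' y') ⊆ O')
    (hyl : y ≤ sInf C) (hy'l : y' ≤ sInf C)
    (hsub : (O ∩ O').Subsingleton) : False := by
  have hax : sInf C ≤ x := csInf_le hbb hx
  have hax' : sInf C ≤ x' := csInf_le hbb hx'
  have h1 : Icc y x ⊆ O := by
    rwa [min_eq_right (hyl.trans hax), max_eq_left (hyl.trans hax)] at hIcc
  have h1' : Icc y' x' ⊆ O' := by
    rwa [min_eq_right (hy'l.trans hax'), max_eq_left (hy'l.trans hax')] at hIcc'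
  have key : Icc (max y y') (min x x') ⊆ O ∩ O' := by
    intro z hz
    exact ⟨h1 ⟨(le_max_left _ _).trans hz.1, hz.2.trans (min_le_left _ _)⟩,
      h1' ⟨(le_max_right _ _).trans hz.1, hz.2.trans (min_le_right _ _)⟩⟩
  have hMa : max y y' ≤ sInf C := max_le hyl hy'l
  have ham : sInf C ≤ min x x' := le_min hax hax'
  have hMm : max y y' ≤ min x x' := hMa.trans ham
  have heq : max y y' = min x x' :=
    hsub (key ⟨le_rfl, hMm⟩) (key ⟨hMm, le_rfl⟩)
  have haM : max y y' = sInf C := le_antisymm hMa (heq ▸ ham)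
  have ham2 : min x x' = sInf C := heq ▸ haM
  have hnC : sInf C ∉ C := by
    rcases max_choice y y' with h | h
    · rw [h] at haM; exact haM ▸ hy
    · rw [h] at haM; exact haM ▸ hy'
  have hC2 : sInf C ∈ C := by
    rcases min_choice x x' with h | h
    · rw [h] at ham2; exact ham2 ▸ hx
    · rw [h] at ham2; exact ham2 ▸ hx'
  exact hnC hC2

lemma pairHigh {C O O' : Set ℝ} (hba : BddAbove C)
    {x y x' y' : ℝ} (hx : x ∈ C) (hy : y ∉ C) (hx' : x' ∈ C) (hy' : y' ∉ C)
    (hIcc : Icc (min x y) (max x y) ⊆ O) (hIcc' : Icc (min x' y') (max x' y') ⊆ O')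
    (hyl : sSup C ≤ y) (hy'l : sSup C ≤ y')
    (hsub : (O ∩ O').Subsingleton) : False := by
  have hax : x ≤ sSup C := le_csSup hba hx
  have hax' : x' ≤ sSup C := le_csSup hba hx'
  have h1 : Icc x y ⊆ O := by
    rwa [min_eq_left (hax.trans hyl), max_eq_right (hax.trans hyl)] at hIcc
  have h1' : Icc x' y' ⊆ O' := by
    rwa [min_eq_left (hax'.trans hy'l), max_eq_right (hax'.trans hy'l)] at hIcc'
  have key : Icc (max x x') (min y y') ⊆ O ∩ O' := by
    intro z hz
    exact ⟨h1 ⟨(le_max_left _ _).trans hz.1, hz.2.trans (min_le_left _ _)⟩,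
      h1' ⟨(le_max_right _ _).trans hz.1, hz.2.trans (min_le_right _ _)⟩⟩
  have hMa : max x x' ≤ sSup C := max_le hax hax'
  have ham : sSup C ≤ min y y' := le_min hyl hy'l
  have hMm : max x x' ≤ min y y' := hMa.trans ham
  have heq : max x x' = min y y' :=
    hsub (key ⟨le_rfl, hMm⟩) (key ⟨hMm, le_rfl⟩)
  have haM : max x x' = sSup C := le_antisymm hMa (heq ▸ ham)
  have ham2 : min y y' = sSup C := heq ▸ haM
  have hC2 : sSup C ∈ C := by
    rcases max_choice x x' with h | h
    · rw [h] at haM; exact haM ▸ hx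
    · rw [h] at haM; exact haM ▸ hx'
  have hnC : sSup C ∉ C := by
    rcases min_choice y y' with h | h
    · rw [h] at ham2; exact ham2 ▸ hy
    · rw [h] at ham2; exact ham2 ▸ hy'
  exact hnC hC2

lemma realKey {C : Set ℝ} (hC : C.OrdConnected) (hbb : BddBelow C) (hba : BddAbove C)
    {O₁ O₂ O₃ : Set ℝ}
    (h12 : (O₁ ∩ O₂).Subsingleton) (h13 : (O₁ ∩ O₃).Subsingleton)
    (h23 : (O₂ ∩ O₃).Subsingleton)
    (H1 : ∃ x y, x ∈ C ∧ y ∉ C ∧ Icc (min x y) (max x y) ⊆ O₁)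
    (H2 : ∃ x y, x ∈ C ∧ y ∉ C ∧ Icc (min x y) (max x y) ⊆ O₂)
    (H3 : ∃ x y, x ∈ C ∧ y ∉ C ∧ Icc (min x y) (max x y) ⊆ O₃) : False := by
  obtain ⟨x₁, y₁, hx₁, hy₁, hI₁⟩ := H1
  obtain ⟨x₂, y₂, hx₂, hy₂, hI₂⟩ := H2
  obtain ⟨x₃, y₃, hx₃, hy₃, hI₃⟩ := H3
  have hCne : C.Nonempty := ⟨x₁, hx₁⟩
  have side : ∀ y : ℝ, y ∉ C → y ≤ sInf C ∨ sSup C ≤ y := by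
    intro y hy
    by_contra h
    push_neg at h
    obtain ⟨c₁, hc₁, hlt₁⟩ := exists_lt_of_csInf_lt hCne h.1
    obtain ⟨c₂, hc₂, hlt₂⟩ := exists_lt_of_lt_csSup hCne h.2
    exact hy (hC.out hc₁ hc₂ ⟨hlt₁.le, hlt₂.le⟩)
  rcases side y₁ hy₁ with s1 | s1 <;> rcases side y₂ hy₂ with s2 | s2 <;>
    rcases side y₃ hy₃ with s3 | s3
  · exact pairLow hbb hx₁ hy₁ hx₂ hy₂ hI₁ hI₂ s1 s2 h12
  · exact pairLow hbb hx₁ hy₁ hx₂ hy₂ hI₁ hI₂ s1 s2 h12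
  · exact pairLow hbb hx₁ hy₁ hx₃ hy₃ hI₁ hI₃ s1 s3 h13
  · exact pairHigh hba hx₂ hy₂ hx₃ hy₃ hI₂ hI₃ s2 s3 h23
  · exact pairLow hbb hx₂ hy₂ hx₃ hy₃ hI₂ hI₃ s2 s3 h23
  · exact pairHigh hba hx₁ hy₁ hx₃ hy₃ hI₁ hI₃ s1 s3 h13
  · exact pairHigh hba hx₁ hy₁ hx₂ hy₂ hI₁ hI₂ s1 s2 h12
  · exact pairHigh hba hx₁ hy₁ hx₂ hy₂ hI₁ hI₂ s1 s2 h12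


/-- coordinate on the circle, cut at `w`. -/
def gg (w z : AddCircle (1:ℝ)) : ℝ := ((AddCircle.equivIco 1 0 (z - w)) : ℝ)

lemma gg_mem (w z : AddCircle (1:ℝ)) : gg w z ∈ Ico (0:ℝ) 1 := by
  simpa [gg] using (AddCircle.equivIco 1 0 (z - w)).2

lemma gg_coe (w z : AddCircle (1:ℝ)) : ((gg w z : ℝ) : AddCircle (1:ℝ)) = z - w := by
  unfold gg AddCircle.equivIco
  rw [← QuotientAddGroup.equivIcoMod_symm_apply]
  exact Equiv.symm_apply_apply _ _

lemma gg_coe_eq (w : AddCircle (1:ℝ)) {r : ℝ} (hr : r ∈ Ico (0:ℝ) 1) :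
    gg w (w + (r : AddCircle (1:ℝ))) = r := by
  have h1 : ((gg w (w + (r:AddCircle (1:ℝ))) : ℝ) : AddCircle (1:ℝ)) = (r : AddCircle (1:ℝ)) := by
    rw [gg_coe]; abel
  have h2 : gg w (w + (r:AddCircle (1:ℝ))) ∈ Ico (0:ℝ) (0 + 1) := by
    simpa using gg_mem w _
  have h3 : r ∈ Ico (0:ℝ) (0 + 1) := by simpa using hr
  exact (AddCircle.coe_eq_coe_iff_of_mem_Ico h2 h3).mp h1

lemma gg_inj (w : AddCircle (1:ℝ)) : Function.Injective (gg w) := by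
  intro z z' h
  have h1 := gg_coe w z
  have h2 := gg_coe w z'
  rw [h] at h1
  exact sub_left_injective (h1.symm.trans h2)

lemma gg_self (w : AddCircle (1:ℝ)) : gg w w = 0 := by
  have := gg_coe_eq w (r := 0) ⟨le_refl _, one_pos⟩
  simpa using this

lemma gg_eq_zero_iff (w z : AddCircle (1:ℝ)) : gg w z = 0 ↔ z = w := by
  constructor
  · intro h
    have h1 := gg_coe w z
    rw [h] at h1
    have h2 : z - w = 0 := by rw [← h1]; norm_num
    exact sub_eq_zero.mp h2
  · intro h; subst h; exact gg_self _

lemma gg_continuousAt {w z : AddCircle (1:ℝ)} (h : z ≠ w) : ContinuousAt (gg w) z := by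
  have h1 : (z - w) ≠ (((0:ℝ) : AddCircle (1:ℝ))) := by
    simp only [QuotientAddGroup.mk_zero]
    intro e; exact h (sub_eq_zero.mp e)
  unfold gg
  apply (continuous_subtype_val.continuousAt).comp
  exact ContinuousAt.comp (g := fun u => AddCircle.equivIco 1 0 u) (f := fun y => y - w)
    (AddCircle.continuousAt_equivIco 1 0 h1) ((continuous_sub_right w).continuousAt)

lemma gg_continuousOn {w : AddCircle (1:ℝ)} {P : Set (AddCircle (1:ℝ))} (h : w ∉ P) :
    ContinuousOn (gg w) P := by
  intro z hz
  have hzw : z ≠ w := by intro e; exact h (e ▸ hz)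
  exact (gg_continuousAt hzw).continuousWithinAt


lemma gg_add_eq (w z : AddCircle (1:ℝ)) : w + ((gg w z : ℝ) : AddCircle (1:ℝ)) = z := by
  rw [gg_coe]; abel

lemma wrapClaim {w : AddCircle (1:ℝ)} {P : Set (AddCircle (1:ℝ))} (hP : IsPreconnected P)
    (hw : w ∈ P) {x : AddCircle (1:ℝ)} (hx : x ∈ P) (ht0 : 0 < gg w x) :
    (∀ u, 0 < u → u < gg w x → u ∈ gg w '' P) ∨
    (∀ v, gg w x < v → v < 1 → v ∈ gg w '' P) := by
  by_contra hcon
  push_neg at hcon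
  obtain ⟨⟨u, hu0, hut, huP⟩, ⟨v, htv, hv1, hvP⟩⟩ := hcon
  have huv : u < v := hut.trans htv
  set A₁ : Set (AddCircle (1:ℝ)) := (gg w) ⁻¹' (Ioo u v) with hA₁def
  set A₂ : Set (AddCircle (1:ℝ)) := ((fun r : ℝ => w + (r : AddCircle (1:ℝ))) '' (Icc u v))ᶜ
    with hA₂def
  have hsubIco : Icc u v ⊆ Ico (0:ℝ) 1 := fun r hr =>
    ⟨hu0.le.trans hr.1, lt_of_le_of_lt hr.2 hv1⟩
  have hA₁o : IsOpen A₁ := by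
    rw [isOpen_iff_mem_nhds]
    intro z hz
    have hzio : gg w z ∈ Ioo u v := hz
    have hzw : z ≠ w := by
      intro e
      rw [e, gg_self] at hzio
      exact absurd hzio.1 (not_lt.mpr hu0.le)
    exact (gg_continuousAt hzw).preimage_mem_nhds (isOpen_Ioo.mem_nhds hzio)
  have hA₂o : IsOpen A₂ := by
    have hcl : IsClosed ((fun r : ℝ => w + (r : AddCircle (1:ℝ))) '' (Icc u v)) :=
      (isCompact_Icc.image (continuous_const.add (AddCircle.continuous_mk' 1))).isClosed
    exact hcl.isOpen_compl
  have hggmem : ∀ z ∈ (fun r : ℝ => w + (r : AddCircle (1:ℝ))) '' (Icc u v),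
      gg w z ∈ Icc u v := by
    rintro z ⟨r, hr, rfl⟩
    rwa [gg_coe_eq w (hsubIco hr)]
  have hcover : P ⊆ A₁ ∪ A₂ := by
    intro z hz
    by_cases hm : gg w z ∈ Icc u v
    · left
      have h1 : gg w z ≠ u := by
        intro e; exact huP (by rw [← e]; exact ⟨z, hz, rfl⟩)
      have h2 : gg w z ≠ v := by
        intro e; exact hvP (by rw [← e]; exact ⟨z, hz, rfl⟩)
      exact ⟨lt_of_le_of_ne hm.1 (Ne.symm h1), lt_of_le_of_ne hm.2 h2⟩
    · right
      intro hmem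
      exact hm (hggmem z hmem)
  have hxA₁ : x ∈ P ∩ A₁ := ⟨hx, ⟨hut, htv⟩⟩
  have hwA₂ : w ∈ P ∩ A₂ := by
    refine ⟨hw, ?_⟩
    intro hmem
    have := hggmem w hmem
    rw [gg_self] at this
    exact absurd this.1 (not_le.mpr hu0)
  obtain ⟨z, hzP, hz1, hz2⟩ := hP A₁ A₂ hA₁o hA₂o hcover ⟨x, hxA₁⟩ ⟨w, hwA₂⟩
  apply hz2
  exact ⟨gg w z, ⟨hz1.1.le, hz1.2.le⟩, gg_add_eq w z⟩

lemma circlePiece {w : AddCircle (1:ℝ)} {C P : Set (AddCircle (1:ℝ))} (hwC : w ∉ C)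
    (hPp : IsPreconnected P)
    (hmeet : (P ∩ C).Nonempty) (hnsub : ¬ P ⊆ C) :
    ∃ O : Set ℝ, ∃ x y : ℝ, x ∈ gg w '' C ∧ y ∉ gg w '' C ∧
      Icc (min x y) (max x y) ⊆ O ∧ O ⊆ gg w '' P ∪ {1} ∧
      (1 ∈ O → ∃ t, 0 ≤ t ∧ t < 1 ∧ Ioo t 1 ⊆ gg w '' P) := by
  obtain ⟨xh, hxP, hxC⟩ := hmeet
  have hxw : xh ≠ w := fun e => hwC (e ▸ hxC)
  have hxmem : gg w xh ∈ Ico (0:ℝ) 1 := gg_mem w xh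
  have hone_notin : ∀ (Q : Set (AddCircle (1:ℝ))), (1:ℝ) ∉ gg w '' Q := by
    rintro Q ⟨z, _, hz⟩
    exact absurd (hz ▸ (gg_mem w z).2) (lt_irrefl _)
  by_cases hwP : w ∈ P
  · have ht0 : 0 < gg w xh := by
      rcases lt_or_eq_of_le hxmem.1 with h | h
      · exact h
      · exact absurd ((gg_eq_zero_iff w xh).mp h.symm) hxw
    rcases wrapClaim hPp hwP hxP ht0 with hL | hR
    · refine ⟨gg w '' P, gg w xh, 0, ⟨xh, hxC, rfl⟩, ?_, ?_, subset_union_left, ?_⟩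
      · rintro ⟨z, hzC, hz⟩
        exact hwC (((gg_eq_zero_iff w z).mp hz) ▸ hzC)
      · rw [min_eq_right ht0.le, max_eq_left ht0.le]
        intro r hr
        rcases eq_or_lt_of_le hr.1 with h0 | h0
        · exact ⟨w, hwP, by rw [gg_self, h0]⟩
        · rcases eq_or_lt_of_le hr.2 with h1 | h1
          · exact ⟨xh, hxP, h1.symm⟩
          · exact hL r h0 h1
      · intro h1; exact absurd h1 (hone_notin P)
    · refine ⟨gg w '' P ∪ {1}, gg w xh, 1, ⟨xh, hxC, rfl⟩, ?_, ?_, subset_rfl, ?_⟩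
      · intro h; exact hone_notin C h
      · rw [min_eq_left hxmem.2.le, max_eq_right hxmem.2.le]
        intro r hr
        rcases eq_or_lt_of_le hr.2 with h1 | h1
        · right; exact h1
        · rcases eq_or_lt_of_le hr.1 with h0 | h0
          · left; exact ⟨xh, hxP, h0⟩
          · left; exact hR r h0 h1
      · intro _
        exact ⟨gg w xh, hxmem.1, hxmem.2, fun r hr => hR r hr.1 hr.2⟩
  · obtain ⟨yh, hyP, hyC⟩ := not_subset.mp hnsub
    have hOo : (gg w '' P).OrdConnected :=
      (hPp.image (gg w) (gg_continuousOn hwP)).ordConnected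
    refine ⟨gg w '' P, gg w xh, gg w yh, ⟨xh, hxC, rfl⟩, ?_, ?_, subset_union_left, ?_⟩
    · rintro ⟨z, hzC, hz⟩
      exact hyC ((gg_inj w hz) ▸ hzC)
    · exact icc_minmax hOo ⟨xh, hxP, rfl⟩ ⟨yh, hyP, rfl⟩
    · intro h1; exact absurd h1 (hone_notin P)


lemma intervalPiece {C P : Set unitInterval} (hP : IsPreconnected P)
    (hmeet : (P ∩ C).Nonempty) (hnsub : ¬ P ⊆ C) :
    ∃ x y : ℝ, x ∈ Subtype.val '' C ∧ y ∉ Subtype.val '' C ∧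
      Icc (min x y) (max x y) ⊆ Subtype.val '' P := by
  obtain ⟨xh, hxP, hxC⟩ := hmeet
  obtain ⟨yh, hyP, hyC⟩ := not_subset.mp hnsub
  have hOo : (Subtype.val '' P : Set ℝ).OrdConnected :=
    (hP.image _ continuous_subtype_val.continuousOn).ordConnected
  refine ⟨xh, yh, ⟨xh, hxC, rfl⟩, ?_, icc_minmax hOo ⟨xh, hxP, rfl⟩ ⟨yh, hyP, rfl⟩⟩
  rintro ⟨z, hzC, hz⟩
  exact hyC ((Subtype.val_injective hz) ▸ hzC)

lemma keyInterval {C P₁ P₂ P₃ : Set unitInterval}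
    (hP₁ : IsPreconnected P₁) (hP₂ : IsPreconnected P₂) (hP₃ : IsPreconnected P₃)
    (hm₁ : (P₁ ∩ C).Nonempty) (hm₂ : (P₂ ∩ C).Nonempty) (hm₃ : (P₃ ∩ C).Nonempty)
    (hn₁ : ¬ P₁ ⊆ C) (hn₂ : ¬ P₂ ⊆ C) (hn₃ : ¬ P₃ ⊆ C)
    (hC : IsPreconnected C)
    (h12 : (P₁ ∩ P₂).Subsingleton) (h13 : (P₁ ∩ P₃).Subsingleton)
    (h23 : (P₂ ∩ P₃).Subsingleton) : False := by
  have hCo : (Subtype.val '' C : Set ℝ).OrdConnected :=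
    (hC.image _ continuous_subtype_val.continuousOn).ordConnected
  have hbb : BddBelow (Subtype.val '' C : Set ℝ) := by
    refine ⟨0, ?_⟩; rintro r ⟨z, _, rfl⟩; exact z.2.1
  have hba : BddAbove (Subtype.val '' C : Set ℝ) := by
    refine ⟨1, ?_⟩; rintro r ⟨z, _, rfl⟩; exact z.2.2
  have hsub : ∀ {P P' : Set unitInterval}, (P ∩ P').Subsingleton →
      ((Subtype.val '' P : Set ℝ) ∩ Subtype.val '' P').Subsingleton := by
    intro P P' h
    rw [← Set.image_inter Subtype.val_injective]
    exact h.image _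
  exact realKey hCo hbb hba (hsub h12) (hsub h13) (hsub h23)
    (intervalPiece hP₁ hm₁ hn₁) (intervalPiece hP₂ hm₂ hn₂) (intervalPiece hP₃ hm₃ hn₃)

lemma keyCircle {C P₁ P₂ P₃ : Set (AddCircle (1:ℝ))}
    (hP₁ : IsPreconnected P₁) (hP₂ : IsPreconnected P₂) (hP₃ : IsPreconnected P₃)
    (hm₁ : (P₁ ∩ C).Nonempty) (hm₂ : (P₂ ∩ C).Nonempty) (hm₃ : (P₃ ∩ C).Nonempty)
    (hn₁ : ¬ P₁ ⊆ C) (hn₂ : ¬ P₂ ⊆ C) (hn₃ : ¬ P₃ ⊆ C)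
    (hC : IsPreconnected C)
    (h12 : (P₁ ∩ P₂).Subsingleton) (h13 : (P₁ ∩ P₃).Subsingleton)
    (h23 : (P₂ ∩ P₃).Subsingleton) : False := by
  by_cases hCu : ∀ z, z ∈ C
  · exact hn₁ (fun z _ => hCu z)
  push_neg at hCu
  obtain ⟨w, hwC⟩ := hCu
  have hCo : (gg w '' C).OrdConnected :=
    ((hC.image _ (gg_continuousOn hwC))).ordConnected
  have hbb : BddBelow (gg w '' C) := by
    refine ⟨0, ?_⟩; rintro r ⟨z, _, rfl⟩; exact (gg_mem w z).1
  have hba : BddAbove (gg w '' C) := by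
    refine ⟨1, ?_⟩; rintro r ⟨z, _, rfl⟩; exact (gg_mem w z).2.le
  obtain ⟨O₁, x₁, y₁, hx₁, hy₁, hI₁, hO₁, hw₁⟩ := circlePiece hwC hP₁ hm₁ hn₁
  obtain ⟨O₂, x₂, y₂, hx₂, hy₂, hI₂, hO₂, hw₂⟩ := circlePiece hwC hP₂ hm₂ hn₂
  obtain ⟨O₃, x₃, y₃, hx₃, hy₃, hI₃, hO₃, hw₃⟩ := circlePiece hwC hP₃ hm₃ hn₃
  -- pairwise: either both wrap (contradiction) or subsingleton
  have pairSub : ∀ {P P' : Set (AddCircle (1:ℝ))} {O O' : Set ℝ},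
      O ⊆ gg w '' P ∪ {1} → O' ⊆ gg w '' P' ∪ {1} →
      (1 ∈ O → ∃ t, 0 ≤ t ∧ t < 1 ∧ Ioo t 1 ⊆ gg w '' P) →
      (1 ∈ O' → ∃ t, 0 ≤ t ∧ t < 1 ∧ Ioo t 1 ⊆ gg w '' P') →
      (P ∩ P').Subsingleton → (O ∩ O').Subsingleton := by
    intro P P' O O' hO hO' hwr hwr' hPP
    by_cases hb : 1 ∈ O ∧ 1 ∈ O'
    · exfalso
      obtain ⟨t, ht0, ht1, hIoo⟩ := hwr hb.1
      obtain ⟨t', ht0', ht1', hIoo'⟩ := hwr' hb.2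
      set m := max t t' with hm
      have hm1 : m < 1 := max_lt ht1 ht1'
      have hr₁ : (m+1)/2 ∈ Ioo m 1 := ⟨by linarith, by linarith⟩
      have hr₂ : ((m+1)/2+1)/2 ∈ Ioo m 1 := ⟨by rcases hr₁ with ⟨a,b⟩; linarith,
        by rcases hr₁ with ⟨a,b⟩; linarith⟩
      have hne : (m+1)/2 ≠ ((m+1)/2+1)/2 := by rcases hr₁ with ⟨a,b⟩; intro e; linarith
      have mem : ∀ r ∈ Ioo m 1, r ∈ gg w '' (P ∩ P') := by
        intro r hr
        obtain ⟨za, hza, ea⟩ := hIoo ⟨lt_of_le_of_lt (le_max_left t t') hr.1, hr.2⟩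
        obtain ⟨zb, hzb, eb⟩ := hIoo' ⟨lt_of_le_of_lt (le_max_right t t') hr.1, hr.2⟩
        have : za = zb := gg_inj w (by rw [ea, eb])
        exact ⟨za, ⟨hza, this ▸ hzb⟩, ea⟩
      obtain ⟨za, hza, ea⟩ := mem _ hr₁
      obtain ⟨zb, hzb, eb⟩ := mem _ hr₂
      have e : za = zb := hPP hza hzb
      rw [e, eb] at ea
      exact hne ea.symm
    · have step : ∀ u ∈ O ∩ O', u ∈ gg w '' (P ∩ P') := by
        intro u hu
        rcases hO hu.1 with h | h
        · rcases hO' hu.2 with h' | h'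
          · obtain ⟨a, ha, ea⟩ := h
            obtain ⟨b, hb', eb⟩ := h'
            have : a = b := gg_inj w (by rw [ea, eb])
            exact ⟨a, ⟨ha, this ▸ hb'⟩, ea⟩
          · exfalso
            rcases mem_singleton_iff.mp h' with rfl
            exact hb ⟨hu.1, hu.2⟩
        · exfalso
          rcases mem_singleton_iff.mp h with rfl
          exact hb ⟨hu.1, hu.2⟩
      intro z hz z' hz'
      exact (hPP.image (gg w)) (step z hz) (step z' hz')
  exact realKey hCo hbb hba
    (pairSub hO₁ hO₂ hw₁ hw₂ h12) (pairSub hO₁ hO₃ hw₁ hw₃ h13)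
    (pairSub hO₂ hO₃ hw₂ hw₃ h23)
    ⟨x₁, y₁, hx₁, hy₁, hI₁⟩ ⟨x₂, y₂, hx₂, hy₂, hI₂⟩ ⟨x₃, y₃, hx₃, hy₃, hI₃⟩

lemma keyCount {d : CurveDomain} {C P₁ P₂ P₃ : Set d.space}
    (hP₁ : IsPreconnected P₁) (hP₂ : IsPreconnected P₂) (hP₃ : IsPreconnected P₃)
    (hm₁ : (P₁ ∩ C).Nonempty) (hm₂ : (P₂ ∩ C).Nonempty) (hm₃ : (P₃ ∩ C).Nonempty)
    (hn₁ : ¬ P₁ ⊆ C) (hn₂ : ¬ P₂ ⊆ C) (hn₃ : ¬ P₃ ⊆ C)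
    (hC : IsPreconnected C)
    (h12 : (P₁ ∩ P₂).Subsingleton) (h13 : (P₁ ∩ P₃).Subsingleton)
    (h23 : (P₂ ∩ P₃).Subsingleton) : False := by
  cases d
  · exact keyInterval hP₁ hP₂ hP₃ hm₁ hm₂ hm₃ hn₁ hn₂ hn₃ hC h12 h13 h23
  · exact keyCircle hP₁ hP₂ hP₃ hm₁ hm₂ hm₃ hn₁ hn₂ hn₃ hC h12 h13 h23


lemma countLe {d : CurveDomain} (F : Set d.space) {m : ℕ} (a : Fin m → unitInterval → d.space)
    (hcont : ∀ k, Continuous (a k))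
    (hover : ∀ k k', k ≠ k' → (range (a k) ∩ range (a k')).Subsingleton)
    (hns : ∀ k, ¬ range (a k) ⊆ F)
    (K : ℕ)
    (hfin : ((fun x => connectedComponentIn F x) '' F).Finite)
    (hcard : ((fun x => connectedComponentIn F x) '' F).ncard ≤ K) :
    (Finset.univ.filter (fun k : Fin m => (range (a k) ∩ F).Nonempty)).card ≤ 2 * K := by
  classical
  set T := Finset.univ.filter (fun k : Fin m => (range (a k) ∩ F).Nonempty) with hT
  set φ : Fin m → Set d.space :=
    fun k => if h : (range (a k) ∩ F).Nonempty then connectedComponentIn F h.choose else ∅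
    with hφ
  have hdataT : ∀ k ∈ T, ∃ x, x ∈ range (a k) ∧ x ∈ F ∧ φ k = connectedComponentIn F x := by
    intro k hk
    rw [hT, Finset.mem_filter] at hk
    have hne : (range (a k) ∩ F).Nonempty := hk.2
    refine ⟨hne.choose, hne.choose_spec.1, hne.choose_spec.2, ?_⟩
    rw [hφ]; exact dif_pos hne
  have hfiber : ∀ b ∈ T.image φ, (T.filter (fun k => φ k = b)).card ≤ 2 := by
    intro b hb
    by_contra hgt
    push_neg at hgt
    obtain ⟨k₁, k₂, k₃, hk₁, hk₂, hk₃, h12, h13, h23⟩ := Finset.two_lt_card_iff.mp hgt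
    have fact : ∀ k, k ∈ T.filter (fun k => φ k = b) →
        (range (a k) ∩ b).Nonempty ∧ ¬ range (a k) ⊆ b ∧ b ⊆ F ∧ IsPreconnected b := by
      intro k hk
      rw [Finset.mem_filter] at hk
      obtain ⟨x, hxr, hxF, hφk⟩ := hdataT k hk.1
      have hbx : b = connectedComponentIn F x := by rw [← hk.2, hφk]
      have hbF : b ⊆ F := hbx ▸ connectedComponentIn_subset F x
      refine ⟨⟨x, hxr, ?_⟩, fun hsub => hns k (hsub.trans hbF), hbF, ?_⟩
      · rw [hbx]; exact mem_connectedComponentIn hxF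
      · rw [hbx]; exact isPreconnected_connectedComponentIn
    obtain ⟨hm₁, hn₁, hbF, hbp⟩ := fact k₁ hk₁
    obtain ⟨hm₂, hn₂, -, -⟩ := fact k₂ hk₂
    obtain ⟨hm₃, hn₃, -, -⟩ := fact k₃ hk₃
    exact keyCount (isPreconnected_range (hcont k₁)) (isPreconnected_range (hcont k₂))
      (isPreconnected_range (hcont k₃)) hm₁ hm₂ hm₃ hn₁ hn₂ hn₃ hbp
      (hover k₁ k₂ h12) (hover k₁ k₃ h13) (hover k₂ k₃ h23)
  have himg : (T.image φ).card ≤ K := by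
    have hsub : ↑(T.image φ) ⊆ (fun x => connectedComponentIn F x) '' F := by
      intro b hb
      rw [Finset.coe_image] at hb
      obtain ⟨k, hk, rfl⟩ := hb
      obtain ⟨x, _, hxF, hφk⟩ := hdataT k hk
      exact ⟨x, hxF, hφk.symm⟩
    calc (T.image φ).card = (↑(T.image φ) : Set (Set d.space)).ncard :=
          (Set.ncard_coe_finset _).symm
      _ ≤ ((fun x => connectedComponentIn F x) '' F).ncard := Set.ncard_le_ncard hsub hfin
      _ ≤ K := hcard
  calc T.card ≤ 2 * (T.image φ).card := Finset.card_le_mul_card_image T 2 hfiber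
    _ ≤ 2 * K := Nat.mul_le_mul_left 2 himg



lemma nonempty_space (d : CurveDomain) : Nonempty d.space := by
  cases d
  · exact ⟨⟨0, ⟨le_refl 0, zero_le_one⟩⟩⟩
  · exact ⟨(0 : AddCircle (1:ℝ))⟩

lemma curve_meets {X : Type*} [TopologicalSpace X] {ι : Type} [Fintype ι]
    (S : ι → Set X) (hS : (⋃ i, S i) = Set.univ) (γ : Curve X) :
    ∃ j, (Set.range γ.toFun ∩ S j).Nonempty := by
  obtain ⟨t⟩ := nonempty_space γ.dom
  have : γ.toFun t ∈ ⋃ i, S i := hS ▸ mem_univ _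
  rw [mem_iUnion] at this
  obtain ⟨j, hj⟩ := this
  exact ⟨j, γ.toFun t, ⟨t, rfl⟩, hj⟩

lemma admissible_const {X : Type*} [TopologicalSpace X] {ι : Type} [Fintype ι]
    (S : ι → Set X) (hS : (⋃ i, S i) = Set.univ) (c : WMCurve X) (hne : Nonempty c.ι) :
    ∃ ρ : ι → ℝ, Admissible {c} S ρ := by
  haveI := hne
  set W := ∑ i, c.w i with hW
  have hWpos : 0 < W := Finset.sum_pos (fun i _ => c.w_pos i) Finset.univ_nonempty
  refine ⟨fun _ => W⁻¹, ⟨fun _ => inv_nonneg.mpr hWpos.le, ?_⟩⟩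
  intro c' hc'
  rw [mem_singleton_iff] at hc'
  rw [hc']
  have hstrand : ∀ i, W⁻¹ ≤ (c.strand i).len S (fun _ => W⁻¹) := by
    intro i
    obtain ⟨j₀, hj₀⟩ := curve_meets S hS (c.strand i)
    rw [Curve.len]
    have hnn : ∀ j ∈ (Finset.univ : Finset ι),
        (0:ℝ) ≤ (if (Set.range (c.strand i).toFun ∩ S j).Nonempty then W⁻¹ else 0) := by
      intro j _
      split
      · exact inv_nonneg.mpr hWpos.le
      · exact le_refl 0
    have hle := Finset.single_le_sum hnn (Finset.mem_univ j₀)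
    rwa [if_pos hj₀] at hle
  have : W * W⁻¹ ≤ c.len S (fun _ => W⁻¹) := by
    rw [WMCurve.len, hW, Finset.sum_mul]
    exact Finset.sum_le_sum fun i _ =>
      mul_le_mul_of_nonneg_left (hstrand i) (c.w_pos i).le
  rwa [mul_inv_cancel₀ hWpos.ne'] at this

end MSAux

/-- Subdivision: for a finite cover `S` of `X`, `q ≥ 1`, a weighted multi-curve
`c` on `X` and a subdivision `d` of `c`:
(a) `mod_q(d, S) ≤ mod_q(c, S)`;
(b) if no piece of `d` has image contained in a single member of `S`, and each strand of `c`
meets each member of `S` in at most `K` connected components of the preimage, then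
`mod_q(c, S) ≤ (2K)^q · mod_q(d, S)`. -/
theorem modulus_subdivision {X : Type*} [TopologicalSpace X] {ι : Type} [Fintype ι]
    (S : ι → Set X) (hS : (⋃ i, S i) = Set.univ) (q : ℝ) (hq : 1 ≤ q)
    (c : WMCurve X) (D : Subdivision c) :
    modulus q {D.curve} S ≤ modulus q {c} S ∧
    ((∀ (p : Σ i : c.ι, Fin (D.m i)) (j : ι),
        ¬ Set.range ((c.strand p.1).toFun ∘ D.a p.1 p.2) ⊆ S j) →
      ∀ K : ℕ,
        (∀ (j : ι) (i : c.ι),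
          ((fun x => connectedComponentIn ((c.strand i).toFun ⁻¹' S j) x) ''
              ((c.strand i).toFun ⁻¹' S j)).Finite ∧
          ((fun x => connectedComponentIn ((c.strand i).toFun ⁻¹' S j) x) ''
              ((c.strand i).toFun ⁻¹' S j)).ncard ≤ K) →
        modulus q {c} S ≤ (2 * (K : ℝ)) ^ q * modulus q {D.curve} S) := by
  classical
  set A : Set ℝ := {V | ∃ ρ : ι → ℝ, Admissible {c} S ρ ∧ V = ∑ i, ρ i ^ q} with hAdef
  set B : Set ℝ := {V | ∃ ρ : ι → ℝ, Admissible {D.curve} S ρ ∧ V = ∑ i, ρ i ^ q} with hBdef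
  have hmodc : modulus q {c} S = sInf A := rfl
  have hmodD : modulus q {D.curve} S = sInf B := rfl
  have hnnA : ∀ V ∈ A, (0:ℝ) ≤ V := by
    rintro V ⟨ρ, hρ, rfl⟩
    exact Finset.sum_nonneg fun j _ => Real.rpow_nonneg (hρ.1 j) q
  have hnnB : ∀ V ∈ B, (0:ℝ) ≤ V := by
    rintro V ⟨ρ, hρ, rfl⟩
    exact Finset.sum_nonneg fun j _ => Real.rpow_nonneg (hρ.1 j) q
  have hbddA : BddBelow A := ⟨0, hnnA⟩
  have hbddB : BddBelow B := ⟨0, hnnB⟩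
  by_cases hempty : IsEmpty c.ι
  · haveI := hempty
    haveI hDempty : IsEmpty (D.curve.ι) := ⟨fun p => hempty.false p.1⟩
    have eA : A = ∅ := by
      rw [eq_empty_iff_forall_notMem]
      rintro V ⟨ρ, ⟨hρ0, hρ1⟩, rfl⟩
      have h1 := hρ1 c (mem_singleton c)
      rw [WMCurve.len, Finset.univ_eq_empty, Finset.sum_empty] at h1
      linarith
    have eB : B = ∅ := by
      rw [eq_empty_iff_forall_notMem]
      rintro V ⟨ρ, ⟨hρ0, hρ1⟩, rfl⟩
      have h1 := hρ1 D.curve (mem_singleton _)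
      rw [WMCurve.len, Finset.univ_eq_empty, Finset.sum_empty] at h1
      linarith
    rw [hmodc, hmodD, eA, eB]
    simp only [Real.sInf_empty]
    refine ⟨le_refl 0, ?_⟩
    intro _ K _
    rw [mul_zero]
  · rw [not_isEmpty_iff] at hempty
    obtain ⟨i₀⟩ := hempty
    have hmpos : ∀ i : c.ι, 0 < D.m i := by
      intro i
      rcases Nat.eq_zero_or_pos (D.m i) with h | h
      · exfalso
        obtain ⟨t⟩ := MSAux.nonempty_space (c.strand i).dom
        have hc : t ∈ ⋃ k, Set.range (D.a i k) := (D.covers i) ▸ mem_univ t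
        rw [mem_iUnion] at hc
        obtain ⟨k, -⟩ := hc
        have := k.2
        omega
      · exact h
    have hAne : A.Nonempty := by
      obtain ⟨ρ, hρ⟩ := MSAux.admissible_const S hS c ⟨i₀⟩
      exact ⟨_, ρ, hρ, rfl⟩
    have hBne : B.Nonempty := by
      obtain ⟨ρ, hρ⟩ := MSAux.admissible_const S hS D.curve ⟨⟨i₀, ⟨0, hmpos i₀⟩⟩⟩
      exact ⟨_, ρ, hρ, rfl⟩
    have lenD_eq : ∀ ρ : ι → ℝ, D.curve.len S ρ
        = ∑ i, c.w i * ∑ k : Fin (D.m i), (D.curve.strand ⟨i, k⟩).len S ρ := by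
      intro ρ
      show (∑ p : (Σ i : c.ι, Fin (D.m i)), D.curve.w p * (D.curve.strand p).len S ρ) = _
      rw [← Finset.univ_sigma_univ, Finset.sum_sigma]
      refine Finset.sum_congr rfl fun i _ => ?_
      rw [Finset.mul_sum]
      rfl
    have hlenMono : ∀ ρ : ι → ℝ, (∀ j, 0 ≤ ρ j) → c.len S ρ ≤ D.curve.len S ρ := by
      intro ρ h0
      rw [WMCurve.len, lenD_eq ρ]
      refine Finset.sum_le_sum fun i _ => mul_le_mul_of_nonneg_left ?_ (c.w_pos i).le
      have hR : (∑ k : Fin (D.m i), (D.curve.strand ⟨i, k⟩).len S ρ)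
          = ∑ j, ∑ k : Fin (D.m i),
            if (Set.range ((c.strand i).toFun ∘ D.a i k) ∩ S j).Nonempty then ρ j else 0 := by
        rw [Finset.sum_comm]
        rfl
      rw [hR, Curve.len]
      refine Finset.sum_le_sum fun j _ => ?_
      by_cases hmj : (Set.range (c.strand i).toFun ∩ S j).Nonempty
      · rw [if_pos hmj]
        obtain ⟨x, ⟨t, hxt⟩, hxS⟩ := hmj
        have ht : t ∈ ⋃ k, Set.range (D.a i k) := (D.covers i) ▸ mem_univ t
        rw [mem_iUnion] at ht
        obtain ⟨k₀, s, hs⟩ := ht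
        have hmem : (Set.range ((c.strand i).toFun ∘ D.a i k₀) ∩ S j).Nonempty :=
          ⟨x, ⟨s, by rw [Function.comp_apply, hs, hxt]⟩, hxS⟩
        have hnn : ∀ k ∈ (Finset.univ : Finset (Fin (D.m i))),
            (0:ℝ) ≤ (if (Set.range ((c.strand i).toFun ∘ D.a i k) ∩ S j).Nonempty
              then ρ j else 0) := by
          intro k _
          split
          · exact h0 j
          · exact le_refl 0
        have hle := Finset.single_le_sum hnn (Finset.mem_univ k₀)
        rwa [if_pos hmem] at hle
      · rw [if_neg hmj]
        refine Finset.sum_nonneg fun k _ => ?_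
        split
        · exact h0 j
        · exact le_refl 0
    have parta : modulus q {D.curve} S ≤ modulus q {c} S := by
      rw [hmodc, hmodD]
      apply csInf_le_csInf hbddB hAne
      rintro V ⟨ρ, ⟨hρ0, hρ1⟩, rfl⟩
      refine ⟨ρ, ⟨hρ0, ?_⟩, rfl⟩
      intro c' hc'
      rw [mem_singleton_iff] at hc'
      rw [hc']
      exact le_trans (hρ1 c (mem_singleton c)) (hlenMono ρ hρ0)
    refine ⟨parta, ?_⟩
    intro hno K hK
    have hKpos : 0 < K := by
      obtain ⟨j₀, x, ⟨t, hxt⟩, hxS⟩ := MSAux.curve_meets S hS (c.strand i₀)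
      have hFne : ((c.strand i₀).toFun ⁻¹' S j₀).Nonempty :=
        ⟨t, by rw [mem_preimage, hxt]; exact hxS⟩
      have h2 : 0 < ((fun x => connectedComponentIn ((c.strand i₀).toFun ⁻¹' S j₀) x) ''
          ((c.strand i₀).toFun ⁻¹' S j₀)).ncard := by
        rw [Set.ncard_pos (hK j₀ i₀).1]
        exact hFne.image _
      have := (hK j₀ i₀).2
      omega
    have h2K : (0:ℝ) < 2 * K := by
      have : (1:ℝ) ≤ K := by exact_mod_cast hKpos
      linarith
    have hlenBound : ∀ ρ : ι → ℝ, (∀ j, 0 ≤ ρ j) →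
        D.curve.len S ρ ≤ (2 * K) * c.len S ρ := by
      intro ρ h0
      rw [lenD_eq ρ, WMCurve.len, Finset.mul_sum]
      refine Finset.sum_le_sum fun i _ => ?_
      rw [← mul_assoc, mul_comm ((2:ℝ) * K) (c.w i), mul_assoc]
      refine mul_le_mul_of_nonneg_left ?_ (c.w_pos i).le
      have hR : (∑ k : Fin (D.m i), (D.curve.strand ⟨i, k⟩).len S ρ)
          = ∑ j, ∑ k : Fin (D.m i),
            if (Set.range ((c.strand i).toFun ∘ D.a i k) ∩ S j).Nonempty then ρ j else 0 := by
        rw [Finset.sum_comm]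
        rfl
      rw [hR, Curve.len, Finset.mul_sum]
      refine Finset.sum_le_sum fun j _ => ?_
      set F := (c.strand i).toFun ⁻¹' S j with hF
      have hiff : ∀ k : Fin (D.m i),
          (Set.range ((c.strand i).toFun ∘ D.a i k) ∩ S j).Nonempty
          ↔ (Set.range (D.a i k) ∩ F).Nonempty := by
        intro k
        constructor
        · rintro ⟨x, ⟨s, rfl⟩, hxS⟩
          exact ⟨D.a i k s, ⟨s, rfl⟩, hxS⟩
        · rintro ⟨t, ⟨s, rfl⟩, htF⟩
          exact ⟨(c.strand i).toFun (D.a i k s), ⟨s, rfl⟩, htF⟩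
      by_cases hmj : (Set.range (c.strand i).toFun ∩ S j).Nonempty
      · rw [if_pos hmj]
        have hcount := MSAux.countLe F (D.a i) (D.cont i)
          (fun k k' hkk => (D.overlap i k k' hkk).1)
          (fun k hsub => hno ⟨i, k⟩ j (by rintro x ⟨s, rfl⟩; exact hsub ⟨s, rfl⟩))
          K (hK j i).1 (hK j i).2
        have hsum : (∑ k : Fin (D.m i),
            if (Set.range ((c.strand i).toFun ∘ D.a i k) ∩ S j).Nonempty then ρ j else 0)
            = ((Finset.univ.filter
                (fun k : Fin (D.m i) => (Set.range (D.a i k) ∩ F).Nonempty)).card : ℝ) * ρ j := by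
          simp only [hiff]
          rw [← Finset.sum_filter, Finset.sum_const, nsmul_eq_mul]
        rw [hsum]
        refine mul_le_mul_of_nonneg_right ?_ (h0 j)
        calc ((Finset.univ.filter
            (fun k : Fin (D.m i) => (Set.range (D.a i k) ∩ F).Nonempty)).card : ℝ)
            ≤ ((2 * K : ℕ) : ℝ) := by exact_mod_cast hcount
          _ = 2 * K := by push_cast; ring
      · rw [if_neg hmj, mul_zero]
        refine le_of_eq (Finset.sum_eq_zero fun k _ => ?_)
        rw [if_neg]
        rintro ⟨x, ⟨s, rfl⟩, hxS⟩
        exact hmj ⟨_, ⟨D.a i k s, rfl⟩, hxS⟩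
    have hpow : (0:ℝ) < (2 * K) ^ q := Real.rpow_pos_of_pos h2K q
    have hstep : ∀ V ∈ B, modulus q {c} S ≤ (2 * (K:ℝ)) ^ q * V := by
      rintro V ⟨ρ, ⟨hρ0, hρ1⟩, rfl⟩
      set ρ' : ι → ℝ := fun j => (2 * K) * ρ j with hρ'
      have hadm : Admissible {c} S ρ' := by
        refine ⟨fun j => mul_nonneg h2K.le (hρ0 j), ?_⟩
        intro c' hc'
        rw [mem_singleton_iff] at hc'
        rw [hc']
        have hscale : c.len S ρ' = (2 * K) * c.len S ρ := by
          rw [WMCurve.len, WMCurve.len, Finset.mul_sum]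
          refine Finset.sum_congr rfl fun i _ => ?_
          have hst : (c.strand i).len S ρ' = (2 * K) * (c.strand i).len S ρ := by
            rw [Curve.len, Curve.len, Finset.mul_sum]
            refine Finset.sum_congr rfl fun j _ => ?_
            simp only [hρ', mul_ite, mul_zero]
          rw [hst]; ring
        rw [hscale]
        calc (1:ℝ) ≤ D.curve.len S ρ := hρ1 D.curve (mem_singleton _)
          _ ≤ (2 * K) * c.len S ρ := hlenBound ρ hρ0
      have hmem : (∑ j, ρ' j ^ q) ∈ A := ⟨ρ', hadm, rfl⟩
      have hval : (∑ j, ρ' j ^ q) = (2 * (K:ℝ)) ^ q * ∑ j, ρ j ^ q := by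
        rw [Finset.mul_sum]
        exact Finset.sum_congr rfl fun j _ => Real.mul_rpow h2K.le (hρ0 j)
      calc modulus q {c} S ≤ ∑ j, ρ' j ^ q := by rw [hmodc]; exact csInf_le hbddA hmem
        _ = _ := hval
    have hdiv : modulus q {c} S / (2 * (K:ℝ)) ^ q ≤ sInf B :=
      le_csInf hBne fun V hV => (div_le_iff₀ hpow).mpr
        (by rw [mul_comm]; exact hstep V hV)
    rw [hmodD]
    have hfin := (div_le_iff₀ hpow).mp hdiv
    rw [mul_comm] at hfin
    exact hfin

end
end

section
/- Let X be a topological space, let U and V be two finite covers of X (finite families of subsets whose unions are X) with K-bounded overlap, let q ≥ 1, and let Γ be any family of weighted multi-curves on X. Then K^{-(q+1)} · mod_q(Γ, V) ≤ mod_q(Γ, U) ≤ K^{q+1} · mod_q(Γ, V). -/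
open Set

noncomputable section

attribute [local instance] Classical.propDecidable

variable {X : Type*} [TopologicalSpace X] {ι : Type} [Fintype ι]

lemma my_ncard_filter {κ : Type} [Fintype κ] (P : κ → Prop) :
    ({j | P j}).ncard = (Finset.univ.filter P).card := by
  classical
  rw [Set.ncard_eq_toFinset_card']
  congr 1
  ext j
  simp

lemma my_transfer {X : Type*} [TopologicalSpace X] {ι κ : Type} [Fintype ι] [Fintype κ]
    (U : ι → Set X) (V : κ → Set X) (hU : (⋃ i, U i) = Set.univ) (K : ℕ) (hK : 1 ≤ K)
    (h1 : ∀ i, {j : κ | (U i ∩ V j).Nonempty}.ncard ≤ K)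
    (h2 : ∀ j, {i : ι | (U i ∩ V j).Nonempty}.ncard ≤ K)
    (q : ℝ) (hq : 1 ≤ q) (Γ : Set (WMCurve X)) (ρ : κ → ℝ) (hρ : Admissible Γ V ρ) :
    ∃ σ : ι → ℝ, Admissible Γ U σ ∧ ∑ i, σ i ^ q ≤ (K : ℝ) ^ (q + 1) * ∑ j, ρ j ^ q := by
  classical
  set s : ι → Finset κ := fun i => Finset.univ.filter fun j => (U i ∩ V j).Nonempty with hs
  have hKR : (0 : ℝ) < (K : ℝ) := by exact_mod_cast hK
  refine ⟨fun i => ∑ j ∈ s i, ρ j,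
    ⟨fun i => Finset.sum_nonneg fun j _ => hρ.1 j, ?_⟩, ?_⟩
  · -- admissibility
    intro c hc
    refine (hρ.2 c hc).trans ?_
    unfold WMCurve.len
    refine Finset.sum_le_sum fun k _ => mul_le_mul_of_nonneg_left ?_ (c.w_pos k).le
    set γ := c.strand k with hγ
    unfold Curve.len
    have key : ∀ i : ι, (if (Set.range γ.toFun ∩ U i).Nonempty then ∑ j ∈ s i, ρ j else 0)
        = ∑ j : κ, (if (Set.range γ.toFun ∩ U i).Nonempty ∧ (U i ∩ V j).Nonempty
            then ρ j else 0) := by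
      intro i
      by_cases h : (Set.range γ.toFun ∩ U i).Nonempty
      · simp only [h, if_true, true_and, hs, Finset.sum_filter]
      · simp [h]
    rw [Finset.sum_congr rfl fun i _ => key i, Finset.sum_comm]
    refine Finset.sum_le_sum fun j _ => ?_
    have hnn : ∀ i : ι,
        0 ≤ (if (Set.range γ.toFun ∩ U i).Nonempty ∧ (U i ∩ V j).Nonempty
          then ρ j else 0) := by
      intro i; split
      · exact hρ.1 j
      · exact le_refl 0
    by_cases h : (Set.range γ.toFun ∩ V j).Nonempty
    · obtain ⟨x, hx1, hx2⟩ := h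
      have hx : x ∈ ⋃ i, U i := hU ▸ Set.mem_univ x
      obtain ⟨i0, hi0⟩ := Set.mem_iUnion.mp hx
      rw [if_pos ⟨x, hx1, hx2⟩]
      calc ρ j = (if (Set.range γ.toFun ∩ U i0).Nonempty ∧ (U i0 ∩ V j).Nonempty
              then ρ j else 0) := by
            rw [if_pos ⟨⟨x, hx1, hi0⟩, ⟨x, hi0, hx2⟩⟩]
        _ ≤ _ := Finset.single_le_sum (fun i _ => hnn i) (Finset.mem_univ i0)
    · rw [if_neg h]
      exact Finset.sum_nonneg fun i _ => hnn i
  · -- volume bound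
    have hcard : ∀ i, ((s i).card : ℝ) ≤ (K : ℝ) := by
      intro i
      have := h1 i
      rw [my_ncard_filter] at this
      exact_mod_cast this
    have step1 : ∀ i : ι, (∑ j ∈ s i, ρ j) ^ q ≤ (K : ℝ) ^ q * ∑ j ∈ s i, ρ j ^ q := by
      intro i
      rcases (s i).eq_empty_or_nonempty with h | h
      · simp [h, Real.zero_rpow (by linarith : q ≠ 0)]
      · obtain ⟨j0, hj0, hmax⟩ := Finset.exists_max_image (s i) ρ h
        have hρj0 : 0 ≤ ρ j0 := hρ.1 j0
        have hsum : ∑ j ∈ s i, ρ j ≤ (K : ℝ) * ρ j0 := by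
          calc ∑ j ∈ s i, ρ j ≤ ∑ _j ∈ s i, ρ j0 :=
                Finset.sum_le_sum fun j hj => hmax j hj
            _ = ((s i).card : ℝ) * ρ j0 := by rw [Finset.sum_const, nsmul_eq_mul]
            _ ≤ (K : ℝ) * ρ j0 := mul_le_mul_of_nonneg_right (hcard i) hρj0
        calc (∑ j ∈ s i, ρ j) ^ q ≤ ((K : ℝ) * ρ j0) ^ q :=
              Real.rpow_le_rpow (Finset.sum_nonneg fun j _ => hρ.1 j) hsum (by linarith)
          _ = (K : ℝ) ^ q * ρ j0 ^ q := Real.mul_rpow hKR.le hρj0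
          _ ≤ (K : ℝ) ^ q * ∑ j ∈ s i, ρ j ^ q :=
              mul_le_mul_of_nonneg_left
                (Finset.single_le_sum (fun j _ => Real.rpow_nonneg (hρ.1 j) q) hj0)
                (Real.rpow_nonneg hKR.le q)
    have step2 : ∑ i, ∑ j ∈ s i, ρ j ^ q ≤ (K : ℝ) * ∑ j, ρ j ^ q := by
      have e1 : ∀ i : ι, ∑ j ∈ s i, ρ j ^ q
          = ∑ j : κ, if (U i ∩ V j).Nonempty then ρ j ^ q else 0 := by
        intro i; rw [hs]; exact Finset.sum_filter _ _
      rw [Finset.sum_congr rfl fun i _ => e1 i, Finset.sum_comm, Finset.mul_sum]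
      refine Finset.sum_le_sum fun j _ => ?_
      have e2 : ∑ i : ι, (if (U i ∩ V j).Nonempty then ρ j ^ q else 0)
          = ((Finset.univ.filter fun i => (U i ∩ V j).Nonempty).card : ℝ) * ρ j ^ q := by
        rw [← Finset.sum_filter, Finset.sum_const, nsmul_eq_mul]
      rw [e2]
      refine mul_le_mul_of_nonneg_right ?_ (Real.rpow_nonneg (hρ.1 j) q)
      have := h2 j
      rw [my_ncard_filter] at this
      exact_mod_cast this
    calc ∑ i, (∑ j ∈ s i, ρ j) ^ q
        ≤ ∑ i, (K : ℝ) ^ q * ∑ j ∈ s i, ρ j ^ q := Finset.sum_le_sum fun i _ => step1 i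
      _ = (K : ℝ) ^ q * ∑ i, ∑ j ∈ s i, ρ j ^ q := by rw [Finset.mul_sum]
      _ ≤ (K : ℝ) ^ q * ((K : ℝ) * ∑ j, ρ j ^ q) :=
          mul_le_mul_of_nonneg_left step2 (Real.rpow_nonneg hKR.le q)
      _ = (K : ℝ) ^ (q + 1) * ∑ j, ρ j ^ q := by
          rw [← mul_assoc, Real.rpow_add_one hKR.ne' q]

lemma my_half {X : Type*} [TopologicalSpace X] {ι κ : Type} [Fintype ι] [Fintype κ]
    (U : ι → Set X) (V : κ → Set X)
    (hU : (⋃ i, U i) = Set.univ) (hV : (⋃ j, V j) = Set.univ)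
    (K : ℕ) (hK : 1 ≤ K)
    (h1 : ∀ i, {j : κ | (U i ∩ V j).Nonempty}.ncard ≤ K)
    (h2 : ∀ j, {i : ι | (U i ∩ V j).Nonempty}.ncard ≤ K)
    (q : ℝ) (hq : 1 ≤ q) (Γ : Set (WMCurve X)) :
    modulus q Γ U ≤ (K : ℝ) ^ (q + 1) * modulus q Γ V := by
  classical
  have hKq : (0 : ℝ) < (K : ℝ) ^ (q + 1) :=
    Real.rpow_pos_of_pos (by exact_mod_cast hK) _
  set A := {W | ∃ ρ : ι → ℝ, Admissible Γ U ρ ∧ W = ∑ i, ρ i ^ q} with hA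
  set B := {W | ∃ ρ : κ → ℝ, Admissible Γ V ρ ∧ W = ∑ j, ρ j ^ q} with hB
  have hAbd : ∀ x ∈ A, (0 : ℝ) ≤ x := by
    rintro x ⟨ρ, hρ, rfl⟩
    exact Finset.sum_nonneg fun i _ => Real.rpow_nonneg (hρ.1 i) q
  have hmodU : modulus q Γ U = sInf A := rfl
  have hmodV : modulus q Γ V = sInf B := rfl
  by_cases hBne : B.Nonempty
  · have key : ∀ b ∈ B, modulus q Γ U ≤ (K : ℝ) ^ (q + 1) * b := by
      rintro b ⟨ρ, hρ, rfl⟩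
      obtain ⟨σ, hσ, hvol⟩ := my_transfer U V hU K hK h1 h2 q hq Γ ρ hρ
      calc modulus q Γ U ≤ ∑ i, σ i ^ q := by
            rw [hmodU]
            exact csInf_le ⟨0, hAbd⟩ ⟨σ, hσ, rfl⟩
        _ ≤ (K : ℝ) ^ (q + 1) * ∑ j, ρ j ^ q := hvol
    have h' : modulus q Γ U / (K : ℝ) ^ (q + 1) ≤ sInf B :=
      le_csInf hBne fun b hb => (div_le_iff₀ hKq).mpr (by rw [mul_comm]; exact key b hb)
    rw [hmodV]
    calc modulus q Γ U = (K : ℝ) ^ (q + 1) * (modulus q Γ U / (K : ℝ) ^ (q + 1)) := by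
          field_simp
      _ ≤ (K : ℝ) ^ (q + 1) * sInf B := mul_le_mul_of_nonneg_left h' hKq.le
  · have hAne : ¬ A.Nonempty := by
      rintro ⟨a, ρ, hρ, rfl⟩
      have h1' : ∀ j, {i : ι | (V j ∩ U i).Nonempty}.ncard ≤ K := by
        intro j
        have : {i : ι | (V j ∩ U i).Nonempty} = {i : ι | (U i ∩ V j).Nonempty} := by
          ext i; simp [Set.inter_comm]
        rw [this]; exact h2 j
      have h2' : ∀ i, {j : κ | (V j ∩ U i).Nonempty}.ncard ≤ K := by
        intro i
        have : {j : κ | (V j ∩ U i).Nonempty} = {j : κ | (U i ∩ V j).Nonempty} := by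
          ext j; simp [Set.inter_comm]
        rw [this]; exact h1 i
      obtain ⟨σ, hσ, _⟩ := my_transfer V U hV K hK h1' h2' q hq Γ ρ hρ
      exact hBne ⟨_, σ, hσ, rfl⟩
    rw [hmodU, hmodV, Set.not_nonempty_iff_eq_empty.mp hBne,
      Set.not_nonempty_iff_eq_empty.mp hAne, Real.sInf_empty]
    simp

/-- Bounded overlap: if two finite covers `U`, `V` of `X` have `K`-bounded
overlap, then for any `q ≥ 1` and any family `Γ` of weighted multi-curves on `X`,
`K^{-(q+1)} · mod_q(Γ, V) ≤ mod_q(Γ, U) ≤ K^{q+1} · mod_q(Γ, V)`. -/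
theorem modulus_bounded_overlap {X : Type*} [TopologicalSpace X]
    {ι κ : Type} [Fintype ι] [Fintype κ]
    (U : ι → Set X) (V : κ → Set X)
    (hU : (⋃ i, U i) = Set.univ) (hV : (⋃ j, V j) = Set.univ)
    (K : ℕ)
    (hUV : ∀ i, 1 ≤ {j : κ | (U i ∩ V j).Nonempty}.ncard ∧
      {j : κ | (U i ∩ V j).Nonempty}.ncard ≤ K)
    (hVU : ∀ j, 1 ≤ {i : ι | (U i ∩ V j).Nonempty}.ncard ∧
      {i : ι | (U i ∩ V j).Nonempty}.ncard ≤ K)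
    (q : ℝ) (hq : 1 ≤ q) (Γ : Set (WMCurve X)) :
    ((K : ℝ) ^ (q + 1))⁻¹ * modulus q Γ V ≤ modulus q Γ U ∧
    modulus q Γ U ≤ (K : ℝ) ^ (q + 1) * modulus q Γ V := by
  classical
  by_cases hK : 1 ≤ K
  · have h1 : ∀ i, {j : κ | (U i ∩ V j).Nonempty}.ncard ≤ K := fun i => (hUV i).2
    have h2 : ∀ j, {i : ι | (U i ∩ V j).Nonempty}.ncard ≤ K := fun j => (hVU j).2
    have h1' : ∀ j, {i : ι | (V j ∩ U i).Nonempty}.ncard ≤ K := by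
      intro j
      have e : {i : ι | (V j ∩ U i).Nonempty} = {i : ι | (U i ∩ V j).Nonempty} := by
        ext i; simp [Set.inter_comm]
      rw [e]; exact h2 j
    have h2' : ∀ i, {j : κ | (V j ∩ U i).Nonempty}.ncard ≤ K := by
      intro i
      have e : {j : κ | (V j ∩ U i).Nonempty} = {j : κ | (U i ∩ V j).Nonempty} := by
        ext j; simp [Set.inter_comm]
      rw [e]; exact h1 i
    have L1 := my_half U V hU hV K hK h1 h2 q hq Γ
    have L2 := my_half V U hV hU K hK h1' h2' q hq Γ
    have hKq : (0 : ℝ) < (K : ℝ) ^ (q + 1) :=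
      Real.rpow_pos_of_pos (by exact_mod_cast hK) _
    refine ⟨?_, L1⟩
    rw [inv_mul_le_iff₀ hKq]
    exact L2
  · -- K = 0, hence ι and κ are empty and both moduli vanish
    have hι : IsEmpty ι := ⟨fun i => hK (le_trans (hUV i).1 (hUV i).2)⟩
    have hκ : IsEmpty κ := ⟨fun j => hK (le_trans (hVU j).1 (hVU j).2)⟩
    have hAU : modulus q Γ U = 0 := by
      have hsub : {W | ∃ ρ : ι → ℝ, Admissible Γ U ρ ∧ W = ∑ i, ρ i ^ q} ⊆ {0} := by
        rintro W ⟨ρ, _, rfl⟩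
        simp [Finset.univ_eq_empty]
      rcases Set.subset_singleton_iff_eq.mp hsub with h | h
      · unfold modulus; rw [h, Real.sInf_empty]
      · unfold modulus; rw [h, csInf_singleton]
    have hAV : modulus q Γ V = 0 := by
      have hsub : {W | ∃ ρ : κ → ℝ, Admissible Γ V ρ ∧ W = ∑ j, ρ j ^ q} ⊆ {0} := by
        rintro W ⟨ρ, _, rfl⟩
        simp [Finset.univ_eq_empty]
      rcases Set.subset_singleton_iff_eq.mp hsub with h | h
      · unfold modulus; rw [h, Real.sInf_empty]
      · unfold modulus; rw [h, csInf_singleton]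
    rw [hAU, hAV]
    simp

end
end

section
/- For every integer n ≥ 2, the polynomial g_n(λ) = λ^{n+1} − 2λⁿ + 1 has exactly one root r_n in the open interval (1, 2), and this root satisfies r_n ≥ 2 − 2^{1−n}. -/
private lemma two_mul_le_two_pow (n : ℕ) (hn : 2 ≤ n) : 2 * n ≤ 2 ^ n := by
  induction n with
  | zero => omega
  | succ m ih =>
    rcases Nat.lt_or_ge m 2 with h | h
    · interval_cases m <;> norm_num
    · have := ih h
      have : 2 ≤ 2 ^ m := Nat.one_lt_two_pow_iff.mpr (by omega)
      calc 2 * (m + 1) = 2 * m + 2 := by ring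
        _ ≤ 2 ^ m + 2 ^ m := by omega
        _ = 2 ^ (m + 1) := by ring

/-- For every integer `n ≥ 2`, the polynomial `g_n(λ) = λ^(n+1) − 2λ^n + 1` has exactly one
root `r_n` in the open interval `(1, 2)`, and this root satisfies `r_n ≥ 2 − 2^(1−n)`. -/
theorem unique_root_in_Ioo_and_lower_bound (n : ℕ) (hn : 2 ≤ n) :
    (∃! r : ℝ, r ∈ Set.Ioo (1 : ℝ) 2 ∧ r ^ (n + 1) - 2 * r ^ n + 1 = 0) ∧
    (∀ r : ℝ, r ∈ Set.Ioo (1 : ℝ) 2 → r ^ (n + 1) - 2 * r ^ n + 1 = 0 →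
      2 - 2 ^ (1 - (n : ℤ)) ≤ r) := by
  set f : ℝ → ℝ := fun x => x ^ (n + 1) - 2 * x ^ n + 1 with hfdef
  have hnR : (2 : ℝ) ≤ (n : ℝ) := by exact_mod_cast hn
  have hderiv : ∀ x : ℝ, HasDerivAt f ((n + 1) * x ^ n - 2 * (n * x ^ (n - 1))) x := by
    intro x
    have h1 := hasDerivAt_pow (n + 1) x
    have h2 := (hasDerivAt_pow n x).const_mul (2 : ℝ)
    have h := (h1.sub h2).add_const 1
    simpa [hfdef, Nat.add_sub_cancel, mul_comm, mul_assoc, mul_left_comm] using h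
  have hcont : Continuous f := by fun_prop
  set c : ℝ := 2 * n / (n + 1) with hcdef
  have hn1pos : (0 : ℝ) < (n : ℝ) + 1 := by linarith
  have hc1 : 1 < c := by
    rw [hcdef, lt_div_iff₀ hn1pos]; linarith
  have hc2 : c < 2 := by
    rw [hcdef, div_lt_iff₀ hn1pos]; linarith
  have hnsub : n - 1 + 1 = n := Nat.succ_pred_eq_of_pos (by positivity)
  have hpow : ∀ x : ℝ, x ^ n = x ^ (n - 1) * x := by
    intro x; conv_lhs => rw [← hnsub, pow_succ]
  -- derivative sign facts
  have hderiv_pos : ∀ x ∈ Set.Ioo c 2, 0 < (n + 1 : ℝ) * x ^ n - 2 * (n * x ^ (n - 1)) := by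
    intro x hx
    have hx0 : (0 : ℝ) < x := lt_trans (lt_trans one_pos hc1) hx.1
    have hxp : (0 : ℝ) < x ^ (n - 1) := pow_pos hx0 _
    have hcx : 2 * (n : ℝ) < ((n : ℝ) + 1) * x := by
      have := hx.1
      rw [hcdef, div_lt_iff₀ hn1pos] at this
      linarith [this]
    have : (n + 1 : ℝ) * x ^ n - 2 * (n * x ^ (n - 1)) =
        x ^ (n - 1) * (((n : ℝ) + 1) * x - 2 * n) := by
      rw [hpow x]; push_cast; ring
    rw [this]
    exact mul_pos hxp (by linarith)
  have hderiv_neg : ∀ x ∈ Set.Ioo (1 : ℝ) c, (n + 1 : ℝ) * x ^ n - 2 * (n * x ^ (n - 1)) < 0 := by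
    intro x hx
    have hx0 : (0 : ℝ) < x := lt_trans one_pos hx.1
    have hxp : (0 : ℝ) < x ^ (n - 1) := pow_pos hx0 _
    have hcx : ((n : ℝ) + 1) * x < 2 * n := by
      have := hx.2
      rw [hcdef, lt_div_iff₀ hn1pos] at this
      linarith [this]
    have heq : (n + 1 : ℝ) * x ^ n - 2 * (n * x ^ (n - 1)) =
        x ^ (n - 1) * (((n : ℝ) + 1) * x - 2 * n) := by
      rw [hpow x]; push_cast; ring
    rw [heq]
    exact mul_neg_of_pos_of_neg hxp (by linarith)
  have hmono : StrictMonoOn f (Set.Icc c 2) := by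
    apply strictMonoOn_of_deriv_pos (convex_Icc c 2) hcont.continuousOn
    intro x hx
    rw [interior_Icc] at hx
    rw [(hderiv x).deriv]
    exact hderiv_pos x hx
  have hanti : StrictAntiOn f (Set.Icc (1 : ℝ) c) := by
    apply strictAntiOn_of_deriv_neg (convex_Icc 1 c) hcont.continuousOn
    intro x hx
    rw [interior_Icc] at hx
    rw [(hderiv x).deriv]
    exact hderiv_neg x hx
  have hf1 : f 1 = 0 := by norm_num [hfdef]
  have hf2 : f 2 = 1 := by
    simp only [hfdef]
    rw [pow_succ]
    ring
  -- any x in (1, c] has f x < 0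
  have hneg : ∀ x : ℝ, 1 < x → x ≤ c → f x < 0 := by
    intro x hx1 hxc
    have := hanti ⟨le_refl 1, le_of_lt hc1⟩ ⟨le_of_lt hx1, hxc⟩ hx1
    rw [hf1] at this; linarith
  have hfc : f c < 0 := hneg c hc1 (le_refl c)
  -- any root in (1,2) is > c
  have hroot_gt : ∀ r : ℝ, r ∈ Set.Ioo (1 : ℝ) 2 → f r = 0 → c < r := by
    intro r hr hr0
    by_contra h
    push_neg at h
    exact absurd hr0 (ne_of_lt (hneg r hr.1 h))
  -- existence
  obtain ⟨r, hrmem, hr0⟩ : ∃ r ∈ Set.Ioo c 2, f r = 0 := by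
    have hsub := intermediate_value_Ioo (le_of_lt hc2) hcont.continuousOn
    have h0 : (0 : ℝ) ∈ Set.Ioo (f c) (f 2) := ⟨hfc, by rw [hf2]; norm_num⟩
    obtain ⟨r, hr, hr0⟩ := hsub h0
    exact ⟨r, hr, hr0⟩
  have hrIoo : r ∈ Set.Ioo (1 : ℝ) 2 := ⟨lt_trans hc1 hrmem.1, hrmem.2⟩
  constructor
  · refine ⟨r, ⟨hrIoo, hr0⟩, ?_⟩
    rintro s ⟨hs, hs0'⟩
    have hs0 : f s = 0 := hs0'
    have hsc : c < s := hroot_gt s hs hs0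
    have h1 : s ∈ Set.Icc c 2 := ⟨le_of_lt hsc, le_of_lt hs.2⟩
    have h2 : r ∈ Set.Icc c 2 := ⟨le_of_lt hrmem.1, le_of_lt hrmem.2⟩
    exact hmono.injOn h1 h2 (by rw [hs0, hr0])
  · intro s hs hs0'
    have hs0 : f s = 0 := hs0'
    have hsc : c < s := hroot_gt s hs hs0
    set t : ℝ := 2 ^ n with htdef
    have ht4 : (4 : ℝ) ≤ t := by
      calc (4 : ℝ) = 2 ^ 2 := by norm_num
        _ ≤ 2 ^ n := pow_le_pow_right₀ (by norm_num) hn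
    have htpos : (0 : ℝ) < t := by linarith
    have hzpow : (2 : ℝ) ^ (1 - (n : ℤ)) = 2 / t := by
      rw [zpow_sub₀ (by norm_num : (2:ℝ) ≠ 0)]
      rw [zpow_one, zpow_natCast]
    rw [hzpow]
    set l : ℝ := 2 - 2 / t with hldef
    -- 2n ≤ t and n+1 ≤ t as reals
    have h2n : 2 * (n : ℝ) ≤ t := by
      have := two_mul_le_two_pow n hn
      calc 2 * (n : ℝ) = ((2 * n : ℕ) : ℝ) := by push_cast; ring
        _ ≤ ((2 ^ n : ℕ) : ℝ) := by exact_mod_cast this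
        _ = t := by push_cast; ring
    -- l ≥ c
    have hlc : c ≤ l := by
      have h1 : 2 / t ≤ 2 / ((n : ℝ) + 1) := by
        apply div_le_div_of_nonneg_left (by norm_num) hn1pos
        linarith
      have h2 : c = 2 - 2 / ((n : ℝ) + 1) := by
        rw [hcdef]; field_simp; ring
      rw [hldef, h2]; linarith
    have hl2 : l < 2 := by
      have : 0 < 2 / t := by positivity
      rw [hldef]; linarith
    -- f l ≤ 0 via Bernoulli
    have hfl : f l ≤ 0 := by
      have hb := one_add_mul_le_pow (a := -1 / t) (by
        rw [neg_div]
        have : 1 / t ≤ 1 := by rw [div_le_one htpos]; linarith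
        linarith) n
      have hl_eq : l = 2 * (1 + -1 / t) := by
        rw [hldef]; field_simp; ring
      have hln : l ^ n = t * (1 + -1 / t) ^ n := by
        rw [hl_eq, mul_pow, htdef]
      have hbound : t / 2 ≤ l ^ n := by
        rw [hln]
        have h1 : 1 - (n : ℝ) / t ≤ (1 + -1 / t) ^ n := by
          have : 1 + (n : ℝ) * (-1 / t) = 1 - (n : ℝ) / t := by ring
          linarith [hb, this ▸ hb]
        have h2 : t * (1 - (n : ℝ) / t) = t - n := by field_simp
        have h3 : t / 2 ≤ t - (n : ℝ) := by linarith
        calc t / 2 ≤ t - (n : ℝ) := h3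
          _ = t * (1 - (n : ℝ) / t) := h2.symm
          _ ≤ t * (1 + -1 / t) ^ n := by
              apply mul_le_mul_of_nonneg_left _ (le_of_lt htpos)
              linarith
      have hfl_eq : f l = l ^ n * (l - 2) + 1 := by
        simp only [hfdef]
        rw [pow_succ]; ring
      have hl2' : l - 2 = -(2 / t) := by rw [hldef]; ring
      rw [hfl_eq, hl2']
      have hlnpos : 0 < l ^ n := lt_of_lt_of_le (by linarith) hbound
      have : l ^ n * (2 / t) ≥ (t / 2) * (2 / t) := by
        apply mul_le_mul_of_nonneg_right hbound (by positivity)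
      have ht2 : (t / 2) * (2 / t) = 1 := by field_simp
      nlinarith
    -- conclude: l ≤ s
    by_contra h
    push_neg at h
    have h1 : s ∈ Set.Icc c 2 := ⟨le_of_lt hsc, le_of_lt hs.2⟩
    have h2 : l ∈ Set.Icc c 2 := ⟨hlc, le_of_lt hl2⟩
    have := hmono h1 h2 h
    rw [hs0] at this
    linarith
end
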